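/- arXiv:1808.10521 — 7 statements merged into one kernel-verified Lean document; each statement's English description precedes it below -/
import Mathlib

section
/- For all positive integers t and all 1 ≤ k ≤ t-1, the unsigned Stirling number of the first kind satisfies [t choose t-k] ≤ C(C(t,2), k), i.e. the number of permutations of [t] with exactly t-k cycles is at most the binomial coefficient of (t choose 2) over k. -/
/-- The number of cycles (orbits, counting fixed points as cycles) of a
permutation of `Fin t`. -/
def cycleCount {t : ℕ} (σ : Equiv.Perm (Fin t)) : ℕ :=
  σ.cycleType.card + (Finset.univ.filter fun x => σ x = x).card

open Equiv Equiv.Perm Finset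

section General
variable {α : Type*} [DecidableEq α] [Fintype α]

/-- Number of cycles (orbits) of a permutation, general version. -/
def cc (σ : Perm α) : ℕ :=
  σ.cycleType.card + (Finset.univ.filter fun x => σ x = x).card

lemma fix_card (σ : Perm α) :
    (Finset.univ.filter fun x => σ x = x).card = Fintype.card α - σ.support.card := by
  have h := Finset.card_filter_add_card_filter_not
    (s := (univ : Finset α)) (p := fun x => σ x = x)
  simp only [Finset.card_univ] at h
  have hsupp : σ.support = univ.filter fun x => ¬ σ x = x := by
    ext x; simp [Equiv.Perm.mem_support]
  rw [hsupp]; omega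

lemma cc_eq (σ : Perm α) :
    cc σ = σ.cycleType.card + (Fintype.card α - σ.cycleType.sum) := by
  rw [cc, fix_card, Equiv.Perm.sum_cycleType]

lemma sum_cycleType_le (σ : Perm α) : σ.cycleType.sum ≤ Fintype.card α := by
  rw [Equiv.Perm.sum_cycleType, ← Finset.card_univ]
  exact Finset.card_le_card (Finset.subset_univ _)

lemma two_mul_card_cycleType_le (σ : Perm α) :
    2 * σ.cycleType.card ≤ σ.cycleType.sum := by
  have := Multiset.card_nsmul_le_sum (s := σ.cycleType)
    (fun x hx => Equiv.Perm.two_le_of_mem_cycleType hx)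
  simpa [smul_eq_mul, mul_comm] using this

lemma support_swap_mul_of_fixed {f : Perm α} {a b : α}
    (ha : f a = a) (hab : a ≠ b) (hb : f b ≠ b) :
    (swap a b * f).support = insert a f.support := by
  have hxa : ∀ x, f x = a → x = a := fun x hx => f.injective (hx.trans ha.symm)
  ext x
  simp only [Equiv.Perm.mem_support, Finset.mem_insert, Equiv.Perm.mul_apply]
  by_cases hxa' : x = a
  · subst hxa'
    simp [ha, Equiv.swap_apply_left, hab, Ne.symm hab]
  · by_cases hfx : f x = x
    · have hxb : x ≠ b := fun h => hb (h ▸ hfx)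
      rw [hfx, Equiv.swap_apply_of_ne_of_ne hxa' hxb]
      simp [hxa', hfx]
    · have h1 : f x ≠ a := fun h => hxa' (hxa x h)
      constructor
      · intro _; exact Or.inr hfx
      · intro _
        by_cases h2 : f x = b
        · rw [h2, Equiv.swap_apply_right]; exact Ne.symm hxa'
        · rw [Equiv.swap_apply_of_ne_of_ne h1 h2]; exact hfx

lemma isCycle_swap_mul_of_fixed {c : Perm α} (hc : c.IsCycle) {a b : α}
    (ha : c a = a) (hab : a ≠ b) (hb : c b ≠ b) :
    (swap a b * c).IsCycle := by
  set g := swap a b * c with hg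
  have hxa : ∀ x, c x = a → x = a := fun x hx => c.injective (hx.trans ha.symm)
  have hanotsupp : a ∉ c.support := by simp [Equiv.Perm.mem_support, ha]
  have hm1 : 1 ≤ orderOf c := (orderOf_pos c)
  have hpow_ne : ∀ j, 0 < j → j < orderOf c → (c ^ j) b ≠ b := by
    intro j hj1 hj2 h
    have h1 : c ^ j = 1 := (hc.pow_eq_one_iff' hb).2 h
    have h2 := orderOf_dvd_of_pow_eq_one h1
    have := Nat.le_of_dvd hj1 h2
    omega
  have claim : ∀ k, k < orderOf c → (g ^ k) b = (c ^ k) b := by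
    intro k
    induction k with
    | zero => simp
    | succ k ih =>
      intro hk
      have hk' : k < orderOf c := Nat.lt_of_succ_lt hk
      have h1 : (c ^ (k + 1)) b ≠ a := by
        intro h
        exact hanotsupp (h ▸ (Equiv.Perm.pow_apply_mem_support.2 (Equiv.Perm.mem_support.2 hb)))
      have h2 : (c ^ (k + 1)) b ≠ b := hpow_ne (k + 1) (Nat.succ_pos k) hk
      have hstep : c ((c ^ k) b) = (c ^ (k + 1)) b := by
        rw [← Equiv.Perm.mul_apply, ← pow_succ']
      rw [pow_succ', Equiv.Perm.mul_apply, ih hk', hg, Equiv.Perm.mul_apply, hstep]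
      exact Equiv.swap_apply_of_ne_of_ne h1 h2
  have hgb : g b = c b := by
    have h1 : c b ≠ a := fun h => hab (hxa b h).symm
    rw [hg, Equiv.Perm.mul_apply]
    exact Equiv.swap_apply_of_ne_of_ne h1 hb
  refine ⟨b, by rw [hgb]; exact hb, ?_⟩
  intro y hy
  by_cases hya : y = a
  · subst hya
    refine ⟨(orderOf c : ℤ), ?_⟩
    rw [zpow_natCast]
    have hsplit : orderOf c = (orderOf c - 1) + 1 := by omega
    have hstep : c ((c ^ (orderOf c - 1)) b) = b := by
      rw [← Equiv.Perm.mul_apply, ← pow_succ', ← hsplit, pow_orderOf_eq_one, Equiv.Perm.one_apply]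
    rw [hsplit, pow_succ', Equiv.Perm.mul_apply, claim _ (by omega), hg, Equiv.Perm.mul_apply,
      hstep, Equiv.swap_apply_right]
  · have hcy : c y ≠ y := by
      intro hcyfix
      apply hy
      have hyb : y ≠ b := fun h => hb (h ▸ hcyfix)
      rw [hg, Equiv.Perm.mul_apply, hcyfix, Equiv.swap_apply_of_ne_of_ne hya hyb]
    obtain ⟨i, hi, hieq⟩ := (hc.sameCycle hb hcy).exists_pow_eq'
    exact ⟨(i : ℤ), by rw [zpow_natCast, claim i hi]; exact hieq⟩

lemma card_support_add_le {f : Perm α} {a : α} (ha : f a = a) :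
    f.support.card + 1 ≤ Fintype.card α := by
  have hanot : a ∉ f.support := by simp [Equiv.Perm.mem_support, ha]
  have h := Finset.card_le_univ (insert a f.support)
  rw [Finset.card_insert_of_notMem hanot] at h
  omega

lemma cc_swap_mul {f : Perm α} {a b : α} (ha : f a = a) (hab : a ≠ b) :
    cc (swap a b * f) + 1 = cc f := by
  have hanot : a ∉ f.support := by simp [Equiv.Perm.mem_support, ha]
  by_cases hfb : f b = b
  · -- disjoint case : b is also a fixed point
    have hbnot : b ∉ f.support := by simp [Equiv.Perm.mem_support, hfb]
    have hdisj : Equiv.Perm.Disjoint (swap a b) f := by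
      intro x
      by_cases hx1 : x = a
      · subst hx1; exact Or.inr ha
      · by_cases hx2 : x = b
        · subst hx2; exact Or.inr hfb
        · exact Or.inl (Equiv.swap_apply_of_ne_of_ne hx1 hx2)
    have hct : (swap a b * f).cycleType = {2} + f.cycleType := by
      rw [Equiv.Perm.Disjoint.cycleType_mul hdisj, (isCycle_swap hab).cycleType, Equiv.Perm.support_swap hab,
        Finset.card_pair hab]
    have hS2 : f.support.card + 2 ≤ Fintype.card α := by
      have hbnot' : b ∉ insert a f.support := by simp [Ne.symm hab, hbnot]
      have h := Finset.card_le_univ (insert b (insert a f.support))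
      rw [Finset.card_insert_of_notMem hbnot', Finset.card_insert_of_notMem hanot] at h
      omega
    have hsum := Equiv.Perm.sum_cycleType f
    rw [cc_eq, cc_eq, hct]
    simp only [Multiset.card_add, Multiset.sum_add, Multiset.card_singleton,
      Multiset.sum_singleton]
    omega
  · -- merge case : b lies on a nontrivial cycle
    set c := f.cycleOf b with hcdef
    have hc : c.IsCycle := Equiv.Perm.isCycle_cycleOf f hfb
    have hcmem : c ∈ f.cycleFactorsFinset :=
      Equiv.Perm.cycleOf_mem_cycleFactorsFinset_iff.2 (Equiv.Perm.mem_support.2 hfb)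
    have hcsupp : c.support ⊆ f.support := Equiv.Perm.support_cycleOf_le f b
    have hca : c a = a := by
      have : a ∉ c.support := fun h => hanot (hcsupp h)
      simpa [Equiv.Perm.mem_support, not_not] using this
    have hcb : c b ≠ b := by
      rw [hcdef, Equiv.Perm.cycleOf_apply_self]; exact hfb
    set f' := f * c⁻¹ with hf'def
    have hdisj : Equiv.Perm.Disjoint f' c :=
      Equiv.Perm.disjoint_mul_inv_of_mem_cycleFactorsFinset hcmem
    have hfact : f'.cycleFactorsFinset = f.cycleFactorsFinset \ {c} :=
      Equiv.Perm.cycleFactorsFinset_mul_inv_mem_eq_sdiff hcmem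
    set g := swap a b * c with hgdef
    have hg : g.IsCycle := isCycle_swap_mul_of_fixed hc hca hab hcb
    have hgsupp : g.support = insert a c.support := support_swap_mul_of_fixed hca hab hcb
    have hf'a : f' a = a := by
      have hc'a : c⁻¹ a = a := by rw [Equiv.Perm.inv_eq_iff_eq, hca]
      rw [hf'def, Equiv.Perm.mul_apply, hc'a, ha]
    have haf' : a ∉ f'.support := by simp [Equiv.Perm.mem_support, hf'a]
    have hcomm : Commute c f := Equiv.Perm.self_mem_cycle_factors_commute hcmem
    have hsigma : swap a b * f = g * f' := by
      have hkey : c * (f * c⁻¹) = f := by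
        rw [← mul_assoc, hcomm.eq, mul_assoc, mul_inv_cancel, mul_one]
      rw [hgdef, hf'def, mul_assoc, hkey]
    -- disjointness of g with every factor of f'
    have hdisj_supp : _root_.Disjoint f'.support c.support := hdisj.disjoint_support
    have hgf' : ∀ d ∈ f'.cycleFactorsFinset, Equiv.Perm.Disjoint g d := by
      intro d hd
      rw [Equiv.Perm.disjoint_iff_disjoint_support, hgsupp]
      have hdsupp : d.support ⊆ f'.support :=
        Equiv.Perm.mem_cycleFactorsFinset_support_le hd
      rw [Finset.insert_eq, Finset.disjoint_union_left]
      constructor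
      · simp only [Finset.disjoint_singleton_left]
        exact fun h => haf' (hdsupp h)
      · exact Finset.disjoint_of_subset_right hdsupp hdisj_supp.symm
    have hgnot : g ∉ f'.cycleFactorsFinset := by
      intro h
      have := Equiv.Perm.mem_cycleFactorsFinset_support_le h
      apply haf'
      apply this
      rw [hgsupp]; exact Finset.mem_insert_self _ _
    -- compute the cycle type of swap a b * f via the factor set insert g (factors f')
    have hpd := Equiv.Perm.cycleFactorsFinset_pairwise_disjoint f'
    have h2 : ((insert g f'.cycleFactorsFinset : Finset (Perm α)) : Set (Perm α)).Pairwise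
        Equiv.Perm.Disjoint := by
      rw [Finset.coe_insert]
      refine Set.pairwise_insert.2
        ⟨hpd, fun d hd _ => ⟨hgf' d hd, (hgf' d hd).symm⟩⟩
    have hct : (swap a b * f).cycleType =
        (insert g f'.cycleFactorsFinset).1.map (Finset.card ∘ Equiv.Perm.support) := by
      apply Equiv.Perm.cycleType_eq' _ _ h2
      · rw [Finset.noncommProd_insert_of_notMem _ _ _ _ hgnot,
          Equiv.Perm.cycleFactorsFinset_noncommProd, hsigma]
        rfl
      · intro d hd
        rcases Finset.mem_insert.1 hd with h | h
        · exact h ▸ hg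
        · exact (Equiv.Perm.mem_cycleFactorsFinset_iff.1 h).1
    -- card of cycle types
    have hcardct : (swap a b * f).cycleType.card = f.cycleType.card := by
      rw [hct, Multiset.card_map, ← Finset.card_def, Finset.card_insert_of_notMem hgnot,
        hfact, Finset.card_sdiff_of_subset (Finset.singleton_subset_iff.2 hcmem),
        Finset.card_singleton]
      have : 1 ≤ f.cycleFactorsFinset.card := Finset.card_pos.2 ⟨c, hcmem⟩
      rw [Equiv.Perm.cycleType_def, Multiset.card_map, ← Finset.card_def]
      omega
    -- support of swap a b * f
    have hsupp : (swap a b * f).support = insert a f.support :=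
      support_swap_mul_of_fixed ha hab hfb
    have hsum : (swap a b * f).cycleType.sum = f.support.card + 1 := by
      rw [Equiv.Perm.sum_cycleType, hsupp, Finset.card_insert_of_notMem hanot]
    have hS := card_support_add_le ha
    have hsumf := Equiv.Perm.sum_cycleType f
    rw [cc_eq, cc_eq, hcardct, hsum]
    omega

end General

section FinPart

/-- The equivalence between `Fin n` and the nonzero elements of `Fin (n+1)`. -/
def succEquiv (n : ℕ) : Fin n ≃ {x : Fin (n + 1) // x ≠ 0} where
  toFun x := ⟨x.succ, Fin.succ_ne_zero x⟩
  invFun y := (y.1).pred y.2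
  left_inv x := by simp
  right_inv y := by simp

lemma decomposeFin_zero_eq (n : ℕ) (e : Perm (Fin n)) :
    Equiv.Perm.decomposeFin.symm (0, e) = e.extendDomain (succEquiv n) := by
  apply Equiv.ext
  intro x
  refine Fin.cases ?_ ?_ x
  · rw [Equiv.Perm.decomposeFin_symm_apply_zero,
      Equiv.Perm.extendDomain_apply_not_subtype _ _ (by simp)]
  · intro i
    have h1 : (i.succ : Fin (n + 1)) = ((succEquiv n) i : Fin (n + 1)) := rfl
    rw [Equiv.Perm.decomposeFin_symm_apply_succ, h1, Equiv.Perm.extendDomain_apply_image]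
    simp [succEquiv]

lemma cc_decomposeFin_zero (n : ℕ) (e : Perm (Fin n)) :
    cc (Equiv.Perm.decomposeFin.symm (0, e)) = cc e + 1 := by
  rw [decomposeFin_zero_eq, cc_eq, cc_eq, Equiv.Perm.cycleType_extendDomain]
  have h := _root_.sum_cycleType_le e
  simp only [Fintype.card_fin] at *
  omega

lemma cc_decomposeFin (n : ℕ) (p : Fin (n + 1)) (e : Perm (Fin n)) :
    cc (Equiv.Perm.decomposeFin.symm (p, e)) = if p = 0 then cc e + 1 else cc e := by
  by_cases hp : p = 0
  · subst hp
    rw [if_pos rfl]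
    exact cc_decomposeFin_zero n e
  · rw [if_neg hp]
    have hsplit : Equiv.Perm.decomposeFin.symm (p, e)
        = swap 0 p * Equiv.Perm.decomposeFin.symm (0, e) := by
      apply Equiv.ext
      intro x
      refine Fin.cases ?_ ?_ x
      · simp [Equiv.Perm.decomposeFin_symm_apply_zero]
      · intro i
        simp [Equiv.Perm.decomposeFin_symm_apply_succ]
    have hfix : Equiv.Perm.decomposeFin.symm ((0 : Fin (n + 1)), e) 0 = 0 :=
      Equiv.Perm.decomposeFin_symm_apply_zero 0 e
    have h1 := cc_swap_mul (f := Equiv.Perm.decomposeFin.symm ((0 : Fin (n + 1)), e))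
      hfix (fun h => hp h.symm)
    have h0 := cc_decomposeFin_zero n e
    rw [hsplit]
    omega

lemma count_step (n c : ℕ) :
    (univ.filter fun σ : Perm (Fin (n + 1)) => cc σ = c).card
      = (univ.filter fun e : Perm (Fin n) => cc e + 1 = c).card
        + n * (univ.filter fun e : Perm (Fin n) => cc e = c).card := by
  rw [Finset.card_filter,
    ← Equiv.sum_comp (Equiv.Perm.decomposeFin.symm :
        Fin (n + 1) × Perm (Fin n) ≃ Perm (Fin (n + 1)))
      (fun σ : Perm (Fin (n + 1)) => if cc σ = c then 1 else 0),
    Fintype.sum_prod_type, Fin.sum_univ_succ]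
  congr 1
  · rw [Finset.card_filter]
    apply Finset.sum_congr rfl
    intro e _
    rw [cc_decomposeFin]
    simp
  · have hterm : ∀ i : Fin n,
        (∑ e : Perm (Fin n),
          if cc (Equiv.Perm.decomposeFin.symm (Fin.succ i, e)) = c then 1 else 0)
        = (univ.filter fun e : Perm (Fin n) => cc e = c).card := by
      intro i
      rw [Finset.card_filter]
      apply Finset.sum_congr rfl
      intro e _
      rw [cc_decomposeFin, if_neg (Fin.succ_ne_zero i)]
    rw [Finset.sum_congr rfl (fun i _ => hterm i), Finset.sum_const, Finset.card_univ,
      Fintype.card_fin, smul_eq_mul]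

lemma cc_ne_zero {m : ℕ} (hm : 1 ≤ m) (σ : Perm (Fin m)) : cc σ ≠ 0 := by
  rw [cc_eq]
  intro h
  have h1 : Multiset.card σ.cycleType = 0 := by omega
  have hσ : σ = 1 := Equiv.Perm.cycleType_eq_zero.1 (Multiset.card_eq_zero.1 h1)
  rw [hσ, Equiv.Perm.cycleType_one] at h
  simp only [Multiset.card_zero, Multiset.sum_zero, Fintype.card_fin] at h
  omega

lemma card_cc_eq_card {m : ℕ} :
    (univ.filter fun σ : Perm (Fin m) => cc σ = m).card ≤ 1 := by
  have hsub : (univ.filter fun σ : Perm (Fin m) => cc σ = m) ⊆ {1} := by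
    intro σ hσ
    rw [Finset.mem_filter] at hσ
    rw [Finset.mem_singleton]
    have h := hσ.2
    rw [cc_eq] at h
    have h1 := _root_.sum_cycleType_le σ
    have h2 := two_mul_card_cycleType_le σ
    simp only [Fintype.card_fin] at *
    have h3 : Multiset.card σ.cycleType = 0 := by omega
    exact Equiv.Perm.cycleType_eq_zero.1 (Multiset.card_eq_zero.1 h3)
  calc (univ.filter fun σ : Perm (Fin m) => cc σ = m).card
      ≤ ({1} : Finset (Perm (Fin m))).card := Finset.card_le_card hsub
    _ = 1 := Finset.card_singleton _

lemma vander (N j : ℕ) : ∀ m : ℕ, N.choose (j + 1) + m * N.choose j ≤ (N + m).choose (j + 1) := by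
  intro m
  induction m with
  | zero => simp
  | succ m ih =>
    have h1 : (N + m + 1).choose (j + 1) = (N + m).choose j + (N + m).choose (j + 1) :=
      Nat.choose_succ_succ (N + m) j
    have h2 : N.choose j ≤ (N + m).choose j := Nat.choose_le_choose j (Nat.le_add_right N m)
    have h3 : N + (m + 1) = N + m + 1 := by omega
    rw [h3, h1]
    have : N.choose (j + 1) + (m + 1) * N.choose j
        = (N.choose (j + 1) + m * N.choose j) + N.choose j := by ring
    omega

lemma main_bound : ∀ n : ℕ, 1 ≤ n → ∀ k : ℕ, 1 ≤ k →
    (univ.filter fun σ : Perm (Fin n) => cc σ = n - k).card ≤ (n.choose 2).choose k := by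
  intro n
  induction n with
  | zero => omega
  | succ n ih =>
    intro _ k hk
    by_cases hn : n = 0
    · subst hn
      have hempty : (univ.filter fun σ : Perm (Fin 1) => cc σ = 1 - k) = ∅ := by
        apply Finset.filter_false_of_mem
        intro σ _
        have := cc_ne_zero (le_refl 1) σ
        omega
      rw [hempty]
      simp
    · rcases le_or_gt k n with hkn | hkn
      · rw [count_step n (n + 1 - k)]
        have hA : (univ.filter fun e : Perm (Fin n) => cc e + 1 = n + 1 - k)
            = (univ.filter fun e : Perm (Fin n) => cc e = n - k) := by
          apply Finset.filter_congr
          intro e _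
          constructor <;> (intro h; omega)
        have hAle : (univ.filter fun e : Perm (Fin n) => cc e = n - k).card
            ≤ (n.choose 2).choose k := ih (by omega) k hk
        have hBle : (univ.filter fun e : Perm (Fin n) => cc e = n + 1 - k).card
            ≤ (n.choose 2).choose (k - 1) := by
          rcases Nat.eq_or_lt_of_le hk with h1 | h1
          · have : n + 1 - k = n := by omega
            rw [this, ← h1]
            simpa using (card_cc_eq_card (m := n))
          · have hrw : (univ.filter fun e : Perm (Fin n) => cc e = n + 1 - k)
                = (univ.filter fun e : Perm (Fin n) => cc e = n - (k - 1)) := by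
              apply Finset.filter_congr
              intro e _
              constructor <;> (intro h; omega)
            rw [hrw]
            exact ih (by omega) (k - 1) (by omega)
        rw [hA]
        have hv := vander (n.choose 2) (k - 1) n
        have hkk : k - 1 + 1 = k := by omega
        rw [hkk] at hv
        have hpascal : n.choose 2 + n = (n + 1).choose 2 := by
          have := Nat.choose_succ_succ n 1
          simp [Nat.choose_one_right] at this
          omega
        calc (univ.filter fun e : Perm (Fin n) => cc e = n - k).card
              + n * (univ.filter fun e : Perm (Fin n) => cc e = n + 1 - k).card
            ≤ (n.choose 2).choose k + n * (n.choose 2).choose (k - 1) := by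
              have := Nat.mul_le_mul_left n hBle
              omega
          _ ≤ (n.choose 2 + n).choose k := hv
          _ = ((n + 1).choose 2).choose k := by rw [hpascal]
      · have hempty : (univ.filter fun σ : Perm (Fin (n + 1)) => cc σ = n + 1 - k) = ∅ := by
          apply Finset.filter_false_of_mem
          intro σ _
          have := cc_ne_zero (by omega : 1 ≤ n + 1) σ
          omega
        rw [hempty]
        simp

end FinPart

/-- The unsigned Stirling number of the first kind `[t, t-k]`, i.e. the number of
permutations of `[t]` with exactly `t - k` cycles, is at most `C(C(t,2), k)`
for all `1 ≤ k ≤ t - 1`. -/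
theorem stmt_1 (t k : ℕ) (ht : 0 < t) (hk1 : 1 ≤ k) (hk2 : k ≤ t - 1) :
    (Finset.univ.filter fun σ : Equiv.Perm (Fin t) => cycleCount σ = t - k).card ≤
      Nat.choose (t.choose 2) k := by
  have h := main_bound t ht k hk1
  have heq : (Finset.univ.filter fun σ : Equiv.Perm (Fin t) => cycleCount σ = t - k)
      = (Finset.univ.filter fun σ : Equiv.Perm (Fin t) => cc σ = t - k) := by
    apply Finset.filter_congr
    intro σ _
    rfl
  rw [heq]
  exact h
end

section
/- Let t be a positive integer and d > t² a positive integer. Let M be the t! × t! real symmetric matrix indexed by permutations σ, σ' of [t] with M_{σσ'} = d^{c(σ⁻¹σ') - t} for σ ≠ σ' and M_{σσ} = 0, where c(π) is the number of cycles of π. Then the operator norm (largest singular value) of M is at most t(t-1)/d. -/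
/-- The `t! × t!` matrix indexed by permutations of `[t]` with entries
`M_{σσ'} = d^(c(σ⁻¹σ') - t)` off-diagonal and `0` on the diagonal. -/
noncomputable def permCycleMatrix (t d : ℕ) :
    Matrix (Equiv.Perm (Fin t)) (Equiv.Perm (Fin t)) ℝ :=
  fun σ σ' => if σ = σ' then 0 else (d : ℝ) ^ (cycleCount (σ⁻¹ * σ')) / (d : ℝ) ^ t

open Equiv Equiv.Perm Finset

set_option linter.unusedSectionVars false

section Orbits

variable {α : Type*} [Fintype α] [DecidableEq α]

/-- The same-cycle setoid of a permutation. -/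
def scSetoid (f : Perm α) : Setoid α :=
  ⟨f.SameCycle, ⟨SameCycle.refl f, fun h => h.symm, fun h h' => h.trans h'⟩⟩

/-- Number of orbits of a permutation. -/
noncomputable def orbCount (f : Perm α) : ℕ := Nat.card (Quotient (scSetoid f))

lemma orbCount_le_card (f : Perm α) : orbCount f ≤ Fintype.card α := by
  have h : Function.Surjective (Quotient.mk (scSetoid f)) := Quotient.mk_surjective
  simpa [orbCount, Nat.card_eq_fintype_card] using Nat.card_le_card_of_surjective _ h

lemma cycleCount_le_orbCount (f : Perm α) :
    f.cycleType.card + (univ.filter fun x => f x = x).card ≤ orbCount f := by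
  classical
  set T := ({c // c ∈ f.cycleFactorsFinset} ⊕ {x // f x = x})
  have hg : ∀ x y, (scSetoid f).r x y →
      (fun x => if h : f x = x then (Sum.inr ⟨x, h⟩ : T) else
        Sum.inl ⟨f.cycleOf x, cycleOf_mem_cycleFactorsFinset_iff.mpr (mem_support.2 h)⟩) x =
      (fun x => if h : f x = x then (Sum.inr ⟨x, h⟩ : T) else
        Sum.inl ⟨f.cycleOf x, cycleOf_mem_cycleFactorsFinset_iff.mpr (mem_support.2 h)⟩) y := by
    intro x y hxy
    by_cases hx : f x = x
    · obtain ⟨i, hi⟩ := hxy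
      have : y = x := by rw [← hi, zpow_apply_eq_self_of_apply_eq_self hx]
      subst this; rfl
    · by_cases hy : f y = y
      · obtain ⟨i, hi⟩ := hxy.symm
        have : x = y := by rw [← hi, zpow_apply_eq_self_of_apply_eq_self hy]
        exact absurd (this ▸ hy) hx
      · simp only [dif_neg hx, dif_neg hy]
        congr 1
        exact Subtype.ext hxy.cycleOf_eq
  set φ : Quotient (scSetoid f) → T := Quotient.lift _ hg
  have hsurj : Function.Surjective φ := by
    rintro (⟨c, hc⟩ | ⟨x, hx⟩)
    · have hcyc := (mem_cycleFactorsFinset_iff.mp hc).1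
      obtain ⟨x, hx⟩ := hcyc.nonempty_support
      have hxf : f x ≠ x := by
        have := (mem_cycleFactorsFinset_iff.mp hc).2 x hx
        rw [← this]; exact mem_support.mp hx
      refine ⟨⟦x⟧, ?_⟩
      show (if h : f x = x then _ else _) = _
      rw [dif_neg hxf]
      congr 1
      exact Subtype.ext (cycle_is_cycleOf hx hc).symm
    · exact ⟨⟦x⟧, by show (if h : f x = x then _ else _) = _; rw [dif_pos hx]⟩
  have hle : Nat.card T ≤ orbCount f := Nat.card_le_card_of_surjective φ hsurj
  have hT : Nat.card T = f.cycleType.card + (univ.filter fun x => f x = x).card := by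
    rw [Nat.card_sum, Nat.card_eq_fintype_card, Nat.card_eq_fintype_card,
      Fintype.card_coe, Fintype.card_subtype]
    congr 2
    rw [cycleType_def, Multiset.card_map]
    rfl
  omega


lemma key_orbCount {f : Perm α} {a : α} (hfa : f a ≠ a) :
    orbCount f + 1 ≤ orbCount (Equiv.swap a (f a) * f) := by
  classical
  set b := f a with hb
  set g := Equiv.swap a b * f with hgdef
  have hga : g a = a := by simp [hgdef, hb]
  have hfg : f = Equiv.swap a b * g := by
    rw [hgdef, ← mul_assoc, Equiv.swap_mul_self, one_mul]
  -- power lemma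
  have hpow : ∀ (n : ℕ) (z : α), ∃ m : ℕ, (f ^ m) z = (g ^ n) z := by
    intro n
    induction n with
    | zero => intro z; exact ⟨0, rfl⟩
    | succ n ih =>
      intro z
      obtain ⟨m, hm⟩ := ih z
      have hstep : (g ^ (n + 1)) z = Equiv.swap a b (f ((f ^ m) z)) := by
        rw [pow_succ', mul_apply, ← hm]; rfl
      by_cases h1 : f ((f ^ m) z) = a
      · refine ⟨m + 2, ?_⟩
        have : (f ^ (m + 2)) z = f (f ((f ^ m) z)) := by
          rw [show m + 2 = 2 + m by omega, pow_add, mul_apply, pow_two, mul_apply]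
        rw [this, h1, hstep, h1, Equiv.swap_apply_left, hb]
      · by_cases h2 : f ((f ^ m) z) = b
        · refine ⟨m, ?_⟩
          have hma : (f ^ m) z = a := f.injective (by rw [h2, hb])
          rw [hstep, h2, Equiv.swap_apply_right, hma]
        · refine ⟨m + 1, ?_⟩
          rw [hstep, Equiv.swap_apply_of_ne_of_ne h1 h2, pow_succ', mul_apply]
  have hsc : ∀ x y : α, g.SameCycle x y → f.SameCycle x y := by
    intro x y h
    obtain ⟨n, _, _, hn⟩ := h.exists_pow_eq''
    obtain ⟨m, hm⟩ := hpow n x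
    exact ⟨m, by rw [zpow_natCast, hm, hn]⟩
  set φ : Quotient (scSetoid g) → Quotient (scSetoid f) :=
    Quotient.map' id (fun x y h => hsc x y h)
  have hφmk : ∀ x : α, φ (Quotient.mk (scSetoid g) x) = Quotient.mk (scSetoid f) x :=
    fun x => rfl
  have hsurj : Function.Surjective φ := by
    intro q
    obtain ⟨x, rfl⟩ := Quotient.mk_surjective q
    exact ⟨Quotient.mk _ x, rfl⟩
  have hab : (Quotient.mk (scSetoid g) a) ≠ (Quotient.mk (scSetoid g) b) := by
    intro h
    have hsame : g.SameCycle a b := Quotient.eq''.mp h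
    obtain ⟨i, hi⟩ := hsame
    rw [zpow_apply_eq_self_of_apply_eq_self hga] at hi
    exact hfa (hb ▸ hi.symm)
  have hφab : φ (Quotient.mk (scSetoid g) a) = φ (Quotient.mk (scSetoid g) b) := by
    rw [hφmk, hφmk]
    exact Quotient.sound (⟨1, by simp [hb]⟩ : f.SameCycle a b)
  -- cardinality
  letI : Fintype (Quotient (scSetoid g)) := Fintype.ofFinite _
  letI : Fintype (Quotient (scSetoid f)) := Fintype.ofFinite _
  have hcards : Fintype.card (Quotient (scSetoid f)) ≤
      Fintype.card (Quotient (scSetoid g)) - 1 := by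
    have hsurjOn : Set.SurjOn φ (↑(univ.erase (Quotient.mk (scSetoid g) b)))
        (↑(univ : Finset (Quotient (scSetoid f)))) := by
      intro y _
      obtain ⟨x, hx⟩ := hsurj y
      by_cases hxb : x = Quotient.mk (scSetoid g) b
      · refine ⟨Quotient.mk (scSetoid g) a, by simp [hab], ?_⟩
        rw [hφab, ← hxb]; exact hx
      · exact ⟨x, by simp [hxb], hx⟩
    have := Finset.card_le_card_of_surjOn φ hsurjOn
    rw [Finset.card_erase_of_mem (mem_univ _), Finset.card_univ, Finset.card_univ] at this
    exact this
  have hpos : 0 < Fintype.card (Quotient (scSetoid g)) :=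
    Fintype.card_pos_iff.mpr ⟨Quotient.mk _ a⟩
  have e1 : orbCount f = Fintype.card (Quotient (scSetoid f)) := Nat.card_eq_fintype_card
  have e2 : orbCount (Equiv.swap a (f a) * f) = Fintype.card (Quotient (scSetoid g)) := by
    rw [orbCount]; exact Nat.card_eq_fintype_card
  have e3 : orbCount (Equiv.swap a (f a) * f) = orbCount g := by rw [← hb, ← hgdef]
  omega


lemma exists_swap_list (f : Perm α) :
    ∃ l : List (Perm α), (∀ τ ∈ l, τ.IsSwap) ∧ l.prod = f ∧
      l.length + orbCount f ≤ Fintype.card α := by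
  suffices H : ∀ (n : ℕ) (f : Perm α), #f.support = n → ∃ l : List (Perm α),
      (∀ τ ∈ l, τ.IsSwap) ∧ l.prod = f ∧ l.length + orbCount f ≤ Fintype.card α from
    H _ f rfl
  intro n
  induction n using Nat.strong_induction_on with
  | _ n ih =>
    intro f hn
    by_cases h1 : f = 1
    · exact ⟨[], by simp, by simp [h1], by simpa using orbCount_le_card f⟩
    · have hne : f.support.Nonempty := by
        rw [Finset.nonempty_iff_ne_empty, Ne, support_eq_empty_iff]; exact h1
      obtain ⟨a, ha⟩ := hne
      have hfa : f a ≠ a := mem_support.mp ha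
      set g := Equiv.swap a (f a) * f with hgdef
      have hlt : #g.support < n := hn ▸ card_support_swap_mul hfa
      obtain ⟨l, hl1, hl2, hl3⟩ := ih _ hlt g rfl
      refine ⟨Equiv.swap a (f a) :: l, ?_, ?_, ?_⟩
      · intro τ hτ
        rcases List.mem_cons.mp hτ with rfl | hτ'
        · exact ⟨a, f a, Ne.symm hfa, rfl⟩
        · exact hl1 τ hτ'
      · rw [List.prod_cons, hl2, hgdef, ← mul_assoc, Equiv.swap_mul_self, one_mul]
      · have hk := key_orbCount hfa
        rw [← hgdef] at hk
        simp only [List.length_cons]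
        omega

lemma card_swaps_le [DecidablePred (Equiv.Perm.IsSwap : Perm α → Prop)] :
    #((univ : Finset (Perm α)).filter (fun τ => τ.IsSwap)) ≤ (Fintype.card α).choose 2 := by
  have : #(Finset.powersetCard 2 (univ : Finset α)) = (Fintype.card α).choose 2 := by
    rw [Finset.card_powersetCard, Finset.card_univ]
  rw [← this]
  apply Finset.card_le_card_of_injOn (fun τ => τ.support)
  · intro τ hτ
    obtain ⟨x, y, hxy, rfl⟩ := (Finset.mem_filter.mp hτ).2
    rw [Finset.mem_coe, Finset.mem_powersetCard]
    exact ⟨Finset.subset_univ _, card_support_swap hxy⟩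
  · intro σ hσ τ hτ hst
    obtain ⟨x, y, hxy, rfl⟩ := (Finset.mem_filter.mp (Finset.mem_coe.mp hσ)).2
    obtain ⟨c, d', hcd, rfl⟩ := (Finset.mem_filter.mp (Finset.mem_coe.mp hτ)).2
    simp only [support_swap hxy, support_swap hcd] at hst
    have hx : x = c ∨ x = d' := by
      have : x ∈ ({c, d'} : Finset α) := hst ▸ (by simp)
      simpa using this
    have hy : y = c ∨ y = d' := by
      have : y ∈ ({c, d'} : Finset α) := hst ▸ (by simp)
      simpa using this
    rcases hx with rfl | rfl
    · rcases hy with rfl | rfl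
      · exact absurd rfl hxy
      · rfl
    · rcases hy with rfl | rfl
      · exact Equiv.swap_comm _ _
      · exact absurd rfl hxy


end Orbits

lemma geom_aux {r : ℝ} (h0 : 0 ≤ r) (h2 : r ≤ 1/2) (n : ℕ) :
    ∑ i ∈ Finset.range n, r ^ i ≤ 2 := by
  induction n with
  | zero => simp
  | succ n ih =>
    have hS0 : 0 ≤ ∑ i ∈ Finset.range n, r ^ i :=
      Finset.sum_nonneg fun i _ => pow_nonneg h0 i
    rw [geom_sum_succ]
    nlinarith

lemma sum_bound (t d : ℕ) (ht : 0 < t) (hd : t ^ 2 < d) :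
    ∑ f ∈ (Finset.univ.erase (1 : Perm (Fin t))),
        (d : ℝ) ^ (cycleCount f) / (d : ℝ) ^ t ≤ (t : ℝ) * ((t : ℝ) - 1) / d := by
  classical
  have hdR : (1 : ℝ) ≤ d := by
    have : 1 ≤ d := le_trans (Nat.one_le_pow _ _ ht) hd.le
    exact_mod_cast this
  have hdpos : (0 : ℝ) < d := lt_of_lt_of_le zero_lt_one hdR
  obtain ⟨L, hLspec⟩ : ∃ L : Perm (Fin t) → List (Perm (Fin t)), ∀ f,
      (∀ τ ∈ L f, τ.IsSwap) ∧ (L f).prod = f ∧ (L f).length + orbCount f ≤ t := by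
    choose L h1 h2 h3 using fun f : Perm (Fin t) => exists_swap_list f
    exact ⟨L, fun f => ⟨h1 f, h2 f, by simpa [Fintype.card_fin] using h3 f⟩⟩
  have hclen : ∀ f : Perm (Fin t), cycleCount f + (L f).length ≤ t := fun f => by
    have ha := (hLspec f).2.2
    have hb : cycleCount f ≤ orbCount f := cycleCount_le_orbCount f
    omega
  set E := (Finset.univ.erase (1 : Perm (Fin t))) with hE
  set q : ℝ := 1 / d with hq
  have hq0 : 0 ≤ q := by positivity
  -- step 1 : termwise bound
  have step1 : ∀ f ∈ E, (d : ℝ) ^ (cycleCount f) / (d : ℝ) ^ t ≤ q ^ ((L f).length) := by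
    intro f _
    have h1 : (L f).length ≤ t := le_trans (Nat.le_add_left _ _) (hclen f)
    have h2 : cycleCount f ≤ t - (L f).length := by have := hclen f; omega
    have hsplit : (d : ℝ) ^ t = (d : ℝ) ^ (t - (L f).length) * (d : ℝ) ^ ((L f).length) := by
      rw [← pow_add, Nat.sub_add_cancel h1]
    have hne : (d : ℝ) ^ (t - (L f).length) ≠ 0 := by positivity
    calc (d : ℝ) ^ (cycleCount f) / (d : ℝ) ^ t
        ≤ (d : ℝ) ^ (t - (L f).length) / (d : ℝ) ^ t := by
          gcongr
      _ = q ^ ((L f).length) := by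
          rw [hsplit, div_mul_eq_div_div, div_self hne, hq, one_div, one_div, inv_pow]
  -- step 1' : length bounds
  have hmaps : ∀ f ∈ E, (L f).length ∈ Finset.Icc 1 t := by
    intro f hf
    have hne1 : f ≠ 1 := (Finset.mem_erase.mp hf).1
    have h1 : (L f).length ≤ t := le_trans (Nat.le_add_left _ _) (hclen f)
    have h0 : (L f).length ≠ 0 := by
      intro h
      apply hne1
      have := (hLspec f).2.1
      rw [← this, List.length_eq_zero_iff.mp h, List.prod_nil]
    rw [Finset.mem_Icc]
    omega
  have hsum1 : ∑ f ∈ E, (d : ℝ) ^ (cycleCount f) / (d : ℝ) ^ t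
      ≤ ∑ f ∈ E, q ^ ((L f).length) := Finset.sum_le_sum step1
  -- fiberwise
  have hfib : ∑ f ∈ E, q ^ ((L f).length)
      = ∑ j ∈ Finset.Icc 1 t, ∑ f ∈ E.filter (fun f => (L f).length = j), q ^ ((L f).length) :=
    (Finset.sum_fiberwise_of_maps_to hmaps _).symm
  set K := #((Finset.univ : Finset (Perm (Fin t))).filter (fun τ => τ.IsSwap)) with hK
  have hKchoose : K ≤ t.choose 2 := by
    have := card_swaps_le (α := Fin t)
    simpa [Fintype.card_fin] using this
  have h2K : 2 * K ≤ t * (t - 1) := by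
    have h1 : 2 * t.choose 2 = t * (t - 1) := by
      rw [Nat.choose_two_right,
        Nat.mul_div_cancel' (even_iff_two_dvd.mp (Nat.even_mul_pred_self t))]
    omega
  have h2Kd : 2 * K ≤ d := by
    have : t * (t - 1) ≤ t ^ 2 := by
      have : t - 1 ≤ t := Nat.sub_le _ _
      calc t * (t - 1) ≤ t * t := Nat.mul_le_mul_left _ this
        _ = t ^ 2 := (sq t).symm
    omega
  -- card of fibers
  have hcard : ∀ j, #(E.filter (fun f => (L f).length = j)) ≤ K ^ j := by
    intro j
    have := Finset.card_le_card_of_injOn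
      (fun f => fun i : Fin j => (L f).getD i 1)
      (s := E.filter (fun f => (L f).length = j))
      (t := Fintype.piFinset (fun _ : Fin j =>
        (Finset.univ : Finset (Perm (Fin t))).filter (fun τ => τ.IsSwap)))
      ?_ ?_
    · calc #(E.filter (fun f => (L f).length = j)) ≤ _ := this
        _ = K ^ j := by
          rw [Fintype.card_piFinset]
          simp [hK]
    · intro f hf
      have hj : (L f).length = j := (Finset.mem_filter.mp hf).2
      rw [Finset.mem_coe, Fintype.mem_piFinset]
      intro i
      have hi : (i : ℕ) < (L f).length := hj ▸ i.isLt
      show (L f).getD (↑i) 1 ∈ _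
      rw [List.getD_eq_getElem _ _ hi]
      rw [Finset.mem_filter]
      exact ⟨Finset.mem_univ _, (hLspec f).1 _ (List.getElem_mem hi)⟩
    · intro f hf f' hf' hff
      have hjf : (L f).length = j := (Finset.mem_filter.mp (Finset.mem_coe.mp hf)).2
      have hjf' : (L f').length = j := (Finset.mem_filter.mp (Finset.mem_coe.mp hf')).2
      have hLeq : L f = L f' := by
        apply List.ext_getElem (by rw [hjf, hjf'])
        intro i h1 h2
        have hij : i < j := hjf ▸ h1
        have h3 : (L f).getD i 1 = (L f').getD i 1 := congrFun hff ⟨i, hij⟩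
        rwa [List.getD_eq_getElem _ _ h1, List.getD_eq_getElem _ _ h2] at h3
      rw [← (hLspec f).2.1, ← (hLspec f').2.1, hLeq]
  -- put together
  set r : ℝ := K * q with hr
  have hr0 : 0 ≤ r := by positivity
  have hrhalf : r ≤ 1 / 2 := by
    rw [hr, hq, mul_one_div, div_le_div_iff₀ hdpos two_pos]
    have : (2 * K : ℝ) ≤ (d : ℝ) := by exact_mod_cast h2Kd
    linarith
  have hinner : ∀ j ∈ Finset.Icc 1 t,
      ∑ f ∈ E.filter (fun f => (L f).length = j), q ^ ((L f).length) ≤ r ^ j := by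
    intro j _
    have heq : ∑ f ∈ E.filter (fun f => (L f).length = j), q ^ ((L f).length)
        = #(E.filter (fun f => (L f).length = j)) * q ^ j := by
      rw [Finset.sum_congr rfl (fun f hf => by rw [(Finset.mem_filter.mp hf).2]),
        Finset.sum_const, nsmul_eq_mul]
    rw [heq, hr, mul_pow]
    apply mul_le_mul_of_nonneg_right _ (pow_nonneg hq0 j)
    exact_mod_cast hcard j
  have hgeo : ∑ j ∈ Finset.Icc 1 t, r ^ j ≤ 2 * r := by
    rw [← Finset.Ico_add_one_right_eq_Icc, Finset.sum_Ico_eq_sum_range]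
    have heq : ∑ i ∈ Finset.range (t + 1 - 1), r ^ (1 + i)
        = r * ∑ i ∈ Finset.range (t + 1 - 1), r ^ i := by
      rw [Finset.mul_sum]
      exact Finset.sum_congr rfl fun i _ => by rw [pow_add, pow_one]
    rw [heq]
    have := geom_aux hr0 hrhalf (t + 1 - 1)
    nlinarith
  have hfin : 2 * r ≤ (t : ℝ) * ((t : ℝ) - 1) / d := by
    have hcast : 2 * (K : ℝ) ≤ (t : ℝ) * ((t : ℝ) - 1) := by
      have h' : ((2 * K : ℕ) : ℝ) ≤ ((t * (t - 1) : ℕ) : ℝ) := Nat.cast_le.mpr h2K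
      push_cast [Nat.cast_sub ht] at h'
      linarith
    rw [hr, hq, mul_one_div, ← mul_div_assoc]
    gcongr
  calc ∑ f ∈ E, (d : ℝ) ^ (cycleCount f) / (d : ℝ) ^ t
      ≤ ∑ f ∈ E, q ^ ((L f).length) := hsum1
    _ = ∑ j ∈ Finset.Icc 1 t, ∑ f ∈ E.filter (fun f => (L f).length = j), q ^ ((L f).length) := hfib
    _ ≤ ∑ j ∈ Finset.Icc 1 t, r ^ j := Finset.sum_le_sum hinner
    _ ≤ 2 * r := hgeo
    _ ≤ (t : ℝ) * ((t : ℝ) - 1) / d := hfin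


set_option maxHeartbeats 1000000 in
lemma schur_test {n : Type*} [Fintype n] (M : Matrix n n ℝ) (x : n → ℝ) (B : ℝ)
    (hB : 0 ≤ B) (h0 : ∀ i j, 0 ≤ M i j)
    (hr : ∀ i, ∑ j, M i j ≤ B) (hc : ∀ j, ∑ i, M i j ≤ B) :
    ∑ i, (∑ j, M i j * x j) ^ 2 ≤ B ^ 2 * ∑ j, x j ^ 2 := by
  have key : ∀ i, (∑ j, M i j * x j) ^ 2 ≤ B * ∑ j, M i j * x j ^ 2 := by
    intro i
    have cs := Finset.sum_mul_sq_le_sq_mul_sq Finset.univ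
      (fun j => Real.sqrt (M i j)) (fun j => Real.sqrt (M i j) * x j)
    have e1 : ∀ j, Real.sqrt (M i j) * (Real.sqrt (M i j) * x j) = M i j * x j := by
      intro j; rw [← mul_assoc, Real.mul_self_sqrt (h0 i j)]
    have e2 : ∀ j, Real.sqrt (M i j) ^ 2 = M i j := fun j => Real.sq_sqrt (h0 i j)
    have e3 : ∀ j, (Real.sqrt (M i j) * x j) ^ 2 = M i j * x j ^ 2 := by
      intro j; rw [mul_pow, e2]
    simp only [e1, e2, e3] at cs
    calc (∑ j, M i j * x j) ^ 2 ≤ (∑ j, M i j) * ∑ j, M i j * x j ^ 2 := cs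
      _ ≤ B * ∑ j, M i j * x j ^ 2 := by
          apply mul_le_mul_of_nonneg_right (hr i)
          exact Finset.sum_nonneg fun j _ => mul_nonneg (h0 i j) (sq_nonneg _)
  calc ∑ i, (∑ j, M i j * x j) ^ 2
      ≤ ∑ i, B * ∑ j, M i j * x j ^ 2 := Finset.sum_le_sum fun i _ => key i
    _ = B * ∑ j, (∑ i, M i j) * x j ^ 2 := by
        rw [← Finset.mul_sum, Finset.sum_comm]
        congr 1
        exact Finset.sum_congr rfl fun j _ => by rw [Finset.sum_mul]
    _ ≤ B * ∑ j, B * x j ^ 2 := by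
        apply mul_le_mul_of_nonneg_left _ hB
        exact Finset.sum_le_sum fun j _ =>
          mul_le_mul_of_nonneg_right (hc j) (sq_nonneg _)
    _ = B ^ 2 * ∑ j, x j ^ 2 := by rw [← Finset.mul_sum]; ring

set_option maxHeartbeats 2000000 in
/-- For `d > t²`, the operator norm (largest singular value) of the matrix `M` with
`M_{σσ'} = d^(c(σ⁻¹σ')-t)` off the diagonal and `0` on the diagonal is at most
`t(t-1)/d`. -/
theorem stmt_2 (t d : ℕ) (ht : 0 < t) (hd : t ^ 2 < d) :
    ∀ x : EuclideanSpace ℝ (Equiv.Perm (Fin t)),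
      ‖Matrix.toEuclideanLin (permCycleMatrix t d) x‖ ≤
        (t : ℝ) * ((t : ℝ) - 1) / (d : ℝ) * ‖x‖ := by
  classical
  intro x
  set M := permCycleMatrix t d with hM
  set B : ℝ := (t : ℝ) * ((t : ℝ) - 1) / d with hB
  have hdpos : (0 : ℝ) < d := by
    have : 0 < d := lt_of_le_of_lt (Nat.zero_le _) hd
    exact_mod_cast this
  have hBnn : 0 ≤ B := by
    rw [hB]
    apply div_nonneg _ hdpos.le
    have : (1 : ℝ) ≤ t := by exact_mod_cast ht
    nlinarith
  have h0 : ∀ i j, 0 ≤ M i j := by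
    intro i j
    rw [hM, permCycleMatrix]
    split
    · exact le_refl 0
    · positivity
  -- row sums
  have hrow : ∀ σ : Perm (Fin t), ∑ σ', M σ σ' ≤ B := by
    intro σ
    have hdiag : M σ σ = 0 := by rw [hM, permCycleMatrix]; simp
    have hsum : ∑ σ', M σ σ' = ∑ σ' ∈ univ.erase σ, M σ σ' :=
      (Finset.sum_erase _ hdiag).symm
    have hre : ∑ σ' ∈ univ.erase σ, M σ σ'
        = ∑ f ∈ univ.erase (1 : Perm (Fin t)), (d : ℝ) ^ (cycleCount f) / (d : ℝ) ^ t := by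
      refine Finset.sum_nbij' (fun σ' => σ⁻¹ * σ') (fun f => σ * f) ?_ ?_ ?_ ?_ ?_
      · intro σ' hσ'
        have h1 : σ' ≠ σ := (Finset.mem_erase.mp hσ').1
        refine Finset.mem_erase.mpr ⟨?_, Finset.mem_univ _⟩
        intro h
        exact h1 (inv_mul_eq_one.mp h).symm
      · intro f hf
        have h1 : f ≠ 1 := (Finset.mem_erase.mp hf).1
        refine Finset.mem_erase.mpr ⟨?_, Finset.mem_univ _⟩
        intro h
        exact h1 (by rwa [mul_eq_left] at h)
      · intro σ' _; simp
      · intro f _; simp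
      · intro σ' hσ'
        show M σ σ' = _
        rw [hM, permCycleMatrix]
        rw [if_neg (Ne.symm (Finset.mem_erase.mp hσ').1)]
    rw [hsum, hre]
    exact sum_bound t d ht hd
  -- column sums
  have hcol : ∀ σ' : Perm (Fin t), ∑ σ, M σ σ' ≤ B := by
    intro σ'
    have hdiag : M σ' σ' = 0 := by rw [hM, permCycleMatrix]; simp
    have hsum : ∑ σ, M σ σ' = ∑ σ ∈ univ.erase σ', M σ σ' :=
      (Finset.sum_erase (s := univ) (f := fun σ => M σ σ') (a := σ') hdiag).symm
    have hre : ∑ σ ∈ univ.erase σ', M σ σ'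
        = ∑ f ∈ univ.erase (1 : Perm (Fin t)), (d : ℝ) ^ (cycleCount f) / (d : ℝ) ^ t := by
      refine Finset.sum_nbij' (fun σ => σ⁻¹ * σ') (fun f => σ' * f⁻¹) ?_ ?_ ?_ ?_ ?_
      · intro σ hσ
        have h1 : σ ≠ σ' := (Finset.mem_erase.mp hσ).1
        refine Finset.mem_erase.mpr ⟨?_, Finset.mem_univ _⟩
        intro h
        apply h1
        have := congrArg (fun u => σ * u) h
        simpa using this.symm
      · intro f hf
        have h1 : f ≠ 1 := (Finset.mem_erase.mp hf).1
        refine Finset.mem_erase.mpr ⟨?_, Finset.mem_univ _⟩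
        intro h
        apply h1
        have : f⁻¹ = 1 := by rwa [mul_eq_left] at h
        simpa using congrArg (·⁻¹) this
      · intro σ _; simp [mul_inv_rev]
      · intro f _; simp [mul_inv_rev]
      · intro σ hσ
        show M σ σ' = _
        rw [hM, permCycleMatrix]
        rw [if_neg (Finset.mem_erase.mp hσ).1]
    rw [hsum, hre]
    exact sum_bound t d ht hd
  -- apply Schur test
  have hs := schur_test M (fun σ => x σ) B hBnn h0 hrow hcol
  have happ : ∀ σ, (Matrix.toEuclideanLin M x) σ = ∑ σ', M σ σ' * x σ' := by
    intro σ
    simp [Matrix.toEuclideanLin_apply, Matrix.mulVec, dotProduct]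
  rw [EuclideanSpace.norm_eq, EuclideanSpace.norm_eq]
  have hgoal : ∑ σ, ‖(Matrix.toEuclideanLin M x) σ‖ ^ 2 ≤ B ^ 2 * ∑ σ, ‖x σ‖ ^ 2 := by
    simp only [Real.norm_eq_abs, sq_abs, happ]
    exact hs
  calc Real.sqrt (∑ σ, ‖(Matrix.toEuclideanLin M x) σ‖ ^ 2)
      ≤ Real.sqrt (B ^ 2 * ∑ σ, ‖x σ‖ ^ 2) := Real.sqrt_le_sqrt hgoal
    _ = B * Real.sqrt (∑ σ, ‖x σ‖ ^ 2) := by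
        rw [Real.sqrt_mul (sq_nonneg B), Real.sqrt_sq hBnn]
end

section
/- Under the hypotheses of the previous statement (d > t², M_{σσ'} = d^{c(σ⁻¹σ')-t} off-diagonal, 0 on diagonal), every eigenvalue of the matrix I + M lies in the interval [1 - t(t-1)/d, 1 + t(t-1)/d]. -/
open Equiv Equiv.Perm Finset

/-- General cycle count (number of orbits) for a permutation of a fintype. -/
def ccount {α : Type*} [Fintype α] [DecidableEq α] (σ : Perm α) : ℕ :=
  Multiset.card σ.cycleType + (Fintype.card α - σ.support.card)

lemma cycleCount_eq_ccount {t : ℕ} (σ : Perm (Fin t)) : cycleCount σ = ccount σ := by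
  unfold cycleCount ccount
  congr 1
  have h := Finset.card_filter_add_card_filter_not
    (s := (univ : Finset (Fin t))) (p := fun x => σ x = x)
  have hsupp : σ.support = univ.filter fun x => ¬ σ x = x := by
    ext x; simp [Equiv.Perm.mem_support]
  rw [hsupp]
  simp only [Finset.card_univ] at h
  omega

lemma ccount_one (α : Type*) [Fintype α] [DecidableEq α] :
    ccount (1 : Perm α) = Fintype.card α := by
  simp [ccount]

lemma isCycle_swap_mul' {α : Type*} [Fintype α] [DecidableEq α] {c : Perm α} (hc : c.IsCycle) {a b : α}
    (ha : a ∉ c.support) (hb : b ∈ c.support) :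
    IsCycle (swap a b * c) ∧ (swap a b * c).support = insert a c.support := by
  have hca : c a = a := Equiv.Perm.notMem_support.mp ha
  have hcb : c b ≠ b := Equiv.Perm.mem_support.mp hb
  have hba : b ≠ a := fun h => ha (h ▸ hb)
  have hxa : ∀ x, c x = a ↔ x = a := fun x =>
    ⟨fun h => c.injective (h.trans hca.symm), fun h => h ▸ hca⟩
  set g := swap a b * c with hg
  have happ : ∀ x, g x = swap a b (c x) := fun x => rfl
  have hga : g a = b := by rw [happ, hca, swap_apply_left]
  have hsup : g.support = insert a c.support := by
    ext x
    simp only [Equiv.Perm.mem_support, Finset.mem_insert]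
    constructor
    · intro hx
      by_contra hcon
      push_neg at hcon
      obtain ⟨hx1, hx2⟩ := hcon
      have hcx : c x = x := Equiv.Perm.notMem_support.mp (by
        simpa [Equiv.Perm.mem_support] using hx2)
      rw [happ, hcx] at hx
      rcases eq_or_ne x b with rfl | hxb
      · exact hcb hcx
      · rw [swap_apply_of_ne_of_ne hx1 hxb] at hx; exact hx rfl
    · rintro (rfl | hx)
      · rw [hga]; exact hba
      · intro hgx
        rw [happ] at hgx
        rcases eq_or_ne (c x) b with hcxb | hne
        · rw [hcxb, swap_apply_right] at hgx
          exact ha (hgx ▸ Equiv.Perm.mem_support.mpr hx)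
        · have hcxa : c x ≠ a := fun h => ha (((hxa x).mp h) ▸ Equiv.Perm.mem_support.mpr hx)
          rw [swap_apply_of_ne_of_ne hcxa hne] at hgx
          exact hx hgx
  refine ⟨⟨a, by rw [hga]; exact hba, ?_⟩, hsup⟩
  intro y hy
  have hy' : y = a ∨ y ∈ c.support := by
    have hmem : y ∈ g.support := Equiv.Perm.mem_support.mpr hy
    rw [hsup] at hmem; simpa using hmem
  rcases hy' with rfl | hy'
  · exact Equiv.Perm.SameCycle.refl _ _
  obtain ⟨n, -, hn⟩ := (hc.sameCycle hcb (Equiv.Perm.mem_support.mp hy')).exists_pow_eq'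
  have key : ∀ n : ℕ, SameCycle g a ((c ^ n : Perm α) b) := by
    intro n
    induction n with
    | zero => exact ⟨1, by simpa using hga⟩
    | succ n ih =>
      have hyb : ((c ^ n : Perm α) b) ∈ c.support := by
        rwa [Equiv.Perm.pow_apply_mem_support]
      have hstep : ((c ^ (n+1) : Perm α)) b = c ((c ^ n : Perm α) b) := by
        rw [pow_succ' c n]; rfl
      rcases eq_or_ne (c ((c ^ n : Perm α) b)) b with hcy | hcy
      · rw [hstep, hcy]; exact ⟨1, by simpa using hga⟩
      · have hya : ((c ^ n : Perm α) b) ≠ a := fun h => ha (h ▸ hyb)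
        have hcya : c ((c ^ n : Perm α) b) ≠ a := fun h => hya ((hxa _).mp h)
        have : g ((c ^ n : Perm α) b) = ((c ^ (n+1) : Perm α)) b := by
          rw [happ, swap_apply_of_ne_of_ne hcya hcy, hstep]
        rw [← this]
        exact (Equiv.Perm.sameCycle_apply_right).mpr ih
  exact hn ▸ key n

lemma ccount_swap_mul {α : Type*} [Fintype α] [DecidableEq α] (τ : Perm α) (a b : α) (ha : τ a = a) (hab : b ≠ a) :
    ccount (swap a b * τ) + 1 = ccount τ := by
  have has : a ∉ τ.support := Equiv.Perm.notMem_support.mpr ha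
  by_cases hb : τ b = b
  · -- disjoint case
    have hdisj : (swap a b).Disjoint τ := by
      intro x
      rcases eq_or_ne x a with rfl | hxa
      · exact Or.inr ha
      · rcases eq_or_ne x b with rfl | hxb
        · exact Or.inr hb
        · exact Or.inl (swap_apply_of_ne_of_ne hxa hxb)
    have hct : (swap a b * τ).cycleType = (swap a b).cycleType + τ.cycleType :=
      hdisj.cycleType_mul
    have hswapct : (swap a b).cycleType = {2} := by
      have h1 : (swap a b).IsCycle := isCycle_swap hab.symm
      rw [h1.cycleType, card_support_swap hab.symm]
    have hsup : (swap a b * τ).support = (swap a b).support ∪ τ.support :=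
      hdisj.support_mul
    have hcard : (swap a b * τ).support.card = 2 + τ.support.card := by
      rw [hsup, Finset.card_union_of_disjoint hdisj.disjoint_support,
        card_support_swap hab.symm]
    have hle : 2 + τ.support.card ≤ Fintype.card α := by
      rw [← hcard]; exact Finset.card_le_univ _
    unfold ccount
    rw [hct, hswapct, hcard]
    simp only [Multiset.card_add, Multiset.card_singleton]
    omega
  · -- merge case
    set c := τ.cycleOf b with hc
    have hbs : b ∈ τ.support := Equiv.Perm.mem_support.mpr hb
    have hcyc : c.IsCycle := Equiv.Perm.isCycle_cycleOf τ hb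
    have hmem : c ∈ τ.cycleFactorsFinset :=
      Equiv.Perm.cycleOf_mem_cycleFactorsFinset_iff.mpr hbs
    set ρ := τ * c⁻¹ with hρ
    have hdisj : ρ.Disjoint c := Equiv.Perm.disjoint_mul_inv_of_mem_cycleFactorsFinset hmem
    have hρct : ρ.cycleType = τ.cycleType - c.cycleType :=
      Equiv.Perm.cycleType_mul_inv_mem_cycleFactorsFinset_eq_sub hmem
    set k := c.support.card with hk
    have hcct : c.cycleType = {k} := by rw [hcyc.cycleType]
    have hkmem : k ∈ τ.cycleType := by
      rw [Equiv.Perm.cycleType_def]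
      exact Multiset.mem_map_of_mem _ (by simpa using hmem)
    have hsub : ({k} : Multiset ℕ) ≤ τ.cycleType := Multiset.singleton_le.mpr hkmem
    -- a, b and c
    have hacs : a ∉ c.support := fun h =>
      has (Equiv.Perm.mem_cycleFactorsFinset_support_le hmem h)
    have hbcs : b ∈ c.support := by
      rw [Equiv.Perm.mem_support, hc, Equiv.Perm.cycleOf_apply_self]; exact hb
    obtain ⟨hgcyc, hgsup⟩ := isCycle_swap_mul' hcyc hacs hbcs
    set g := swap a b * c with hg
    -- ρ a = a
    have hca : c a = a := Equiv.Perm.notMem_support.mp hacs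
    have hρa : ρ a = a := by
      have : c⁻¹ a = a := c.injective (by simp [hca])
      rw [hρ, Perm.mul_apply, this, ha]
    -- disjoint g ρ
    have hgρ : g.Disjoint ρ := by
      intro x
      by_cases hx : ρ x = x
      · exact Or.inr hx
      · refine Or.inl ?_
        have hxg : x ∉ g.support := by
          rw [hgsup, Finset.mem_insert]
          push_neg
          refine ⟨fun h => hx (h ▸ hρa), fun h => ?_⟩
          rcases hdisj x with h1 | h2
          · exact hx h1
          · exact (Equiv.Perm.mem_support.mp h) h2
        exact Equiv.Perm.notMem_support.mp hxg
    -- swap a b * τ = g * ρ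
    have hfact : swap a b * τ = g * ρ := by
      have hcomm : ρ * c = c * ρ := (hdisj.commute).eq
      have : τ = ρ * c := by rw [hρ]; group
      rw [hg, this, hcomm, ← mul_assoc]
    have hct2 : (swap a b * τ).cycleType = g.cycleType + ρ.cycleType := by
      rw [hfact, hgρ.cycleType_mul]
    have hgct : g.cycleType = {k + 1} := by
      rw [hgcyc.cycleType, hgsup, Finset.card_insert_of_notMem hacs]
    -- support cards
    have hρsc : ρ.support.card = τ.support.card - k := by
      have h1 : ρ.cycleType.sum = τ.cycleType.sum - k := by
        rw [hρct, hcct]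
        have h2 : (τ.cycleType - {k}) + {k} = τ.cycleType := tsub_add_cancel_of_le hsub
        have h3 : (τ.cycleType - {k}).sum + k = τ.cycleType.sum := by
          conv_rhs => rw [← h2]
          rw [Multiset.sum_add]; simp
        omega
      rw [← Equiv.Perm.sum_cycleType, ← Equiv.Perm.sum_cycleType, h1]
    have hkle : k ≤ τ.support.card := by
      rw [hk]; exact Finset.card_le_card (Equiv.Perm.support_cycleOf_le τ b)
    have hsupcard : (swap a b * τ).support.card = τ.support.card + 1 := by
      rw [hfact, hgρ.support_mul, Finset.card_union_of_disjoint hgρ.disjoint_support,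
        hgsup, Finset.card_insert_of_notMem hacs, hρsc]
      have hk1 : 1 ≤ k := le_trans (by norm_num) (Equiv.Perm.IsCycle.two_le_card_support hcyc)
      omega
    have hsle : τ.support.card + 1 ≤ Fintype.card α := by
      rw [← hsupcard]; exact Finset.card_le_univ _
    have hctcard : Multiset.card ((swap a b * τ).cycleType)
        = Multiset.card τ.cycleType := by
      rw [hct2, hgct, Multiset.card_add, hρct, hcct, Multiset.card_sub hsub]
      have : 1 ≤ Multiset.card τ.cycleType := by
        rw [Nat.one_le_iff_ne_zero, ← Nat.pos_iff_ne_zero]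
        exact Multiset.card_pos.mpr (fun h => by simp [h] at hkmem)
      simp only [Multiset.card_singleton]
      omega
    unfold ccount
    rw [hctcard, hsupcard]
    omega

lemma decomposeFin_succ_eq {t : ℕ} (σ : Perm (Fin t)) (p : Fin (t + 1)) :
    Equiv.Perm.decomposeFin.symm (p, σ)
      = swap 0 p * Equiv.Perm.decomposeFin.symm (0, σ) := by
  ext x
  refine Fin.cases ?_ ?_ x
  · simp
  · intro i
    simp [Equiv.Perm.decomposeFin_symm_apply_succ]

lemma ccount_decomposeFin_zero {t : ℕ} (σ : Perm (Fin t)) :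
    ccount (Equiv.Perm.decomposeFin.symm (0, σ)) = ccount σ + 1 := by
  have hne : ∀ j : Fin t, (j.succ : Fin (t+1)) ≠ 0 := fun j => Fin.succ_ne_zero j
  let f : Fin t ≃ {x : Fin (t + 1) // x ≠ 0} :=
    { toFun := fun j => ⟨j.succ, hne j⟩
      invFun := fun x => x.1.pred x.2
      left_inv := fun j => by simp
      right_inv := fun x => by simp }
  have hE : Equiv.Perm.decomposeFin.symm (0, σ) = σ.extendDomain f := by
    ext x
    refine Fin.cases ?_ ?_ x
    · rw [Equiv.Perm.decomposeFin_symm_apply_zero,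
        Equiv.Perm.extendDomain_apply_not_subtype _ f (by simp)]
    · intro i
      rw [Equiv.Perm.decomposeFin_symm_apply_succ]
      simp only [swap_self, Equiv.refl_apply]
      exact congrArg Fin.val (Equiv.Perm.extendDomain_apply_image σ f i).symm
  rw [hE]
  unfold ccount
  rw [Equiv.Perm.cycleType_extendDomain]
  have hsup : (σ.extendDomain f).support.card = σ.support.card := by
    rw [← Equiv.Perm.sum_cycleType, ← Equiv.Perm.sum_cycleType,
      Equiv.Perm.cycleType_extendDomain]
  rw [hsup]
  have : σ.support.card ≤ Fintype.card (Fin t) := Finset.card_le_univ _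
  simp only [Fintype.card_fin] at *
  omega

lemma sum_pow_ccount (d : ℕ) : ∀ t : ℕ,
    ∑ σ : Perm (Fin t), d ^ ccount σ = ∏ i ∈ range t, (d + i) := by
  intro t
  induction t with
  | zero =>
    rw [range_zero, prod_empty]
    have h1 : ∀ σ : Perm (Fin 0), d ^ ccount σ = 1 := fun σ => by
      have hσ : σ = 1 := by ext x; exact x.elim0
      subst hσ; simp [ccount_one]
    rw [Finset.sum_congr rfl fun σ _ => h1 σ, Finset.sum_const, Finset.card_univ]
    simp
  | succ t ih =>
    have h4 := Equiv.sum_comp Equiv.Perm.decomposeFin.symm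
      (fun σ : Perm (Fin (t+1)) => d ^ ccount σ)
    rw [← h4, Fintype.sum_prod_type]
    rw [Fin.sum_univ_succ]
    have h0 : ∀ σ : Perm (Fin t),
        d ^ ccount (Equiv.Perm.decomposeFin.symm (0, σ)) = d * d ^ ccount σ := by
      intro σ; rw [ccount_decomposeFin_zero, pow_succ, mul_comm]
    have hsucc : ∀ (j : Fin t) (σ : Perm (Fin t)),
        ccount (Equiv.Perm.decomposeFin.symm (j.succ, σ)) = ccount σ := by
      intro j σ
      have h1 := ccount_swap_mul (Equiv.Perm.decomposeFin.symm (0, σ)) 0 j.succ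
        (by simp) (Fin.succ_ne_zero j)
      rw [← decomposeFin_succ_eq] at h1
      have h2 := ccount_decomposeFin_zero σ
      omega
    simp only [h0]
    have h3 : ∀ j : Fin t, ∑ σ : Perm (Fin t),
        d ^ ccount (Equiv.Perm.decomposeFin.symm (j.succ, σ))
        = ∑ σ : Perm (Fin t), d ^ ccount σ := by
      intro j
      exact Finset.sum_congr rfl fun σ _ => by rw [hsucc j σ]
    rw [Finset.sum_congr rfl (fun j (_ : j ∈ univ) => h3 j), Finset.sum_const,
      Finset.card_univ, Fintype.card_fin, ← Finset.mul_sum, ih,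
      Finset.prod_range_succ, smul_eq_mul]
    ring

lemma prod_le (d t : ℕ) (h : t * t ≤ d) :
    ∏ i ∈ range t, (d + i) ≤ d ^ t + t * (t - 1) * d ^ (t - 1) := by
  induction t with
  | zero => simp
  | succ t ih =>
    have ht : t * t ≤ d := by nlinarith
    have h1 := ih ht
    rw [Finset.prod_range_succ]
    have h2 : (∏ i ∈ range t, (d + i)) * (d + t)
        ≤ (d ^ t + t * (t - 1) * d ^ (t - 1)) * (d + t) := Nat.mul_le_mul_right _ h1
    refine h2.trans ?_
    rcases t with _ | m
    · simp
    · have hd : (m + 1) * m ≤ d := by nlinarith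
      have hD : (m + 1) * m * d ^ m ≤ d * d ^ m := Nat.mul_le_mul_right _ hd
      simp only [Nat.add_sub_cancel]
      have e3 : d ^ (m + 1) = d ^ m * d := pow_succ d m
      have e4 : d ^ (m + 1 + 1) = d ^ m * d * d := by rw [pow_succ, e3]
      rw [e3, e4]
      nlinarith [hD]

/-- For `d > t²`, every eigenvalue of `I + M` lies in `[1 - t(t-1)/d, 1 + t(t-1)/d]`. -/
theorem stmt_3 (t d : ℕ) (ht : 0 < t) (hd : t ^ 2 < d) (μ : ℝ)
    (hμ : Module.End.HasEigenvalue
      (Matrix.toEuclideanLin (1 + permCycleMatrix t d)) μ) :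
    1 - (t : ℝ) * ((t : ℝ) - 1) / d ≤ μ ∧ μ ≤ 1 + (t : ℝ) * ((t : ℝ) - 1) / d := by
  have hd0 : (0 : ℝ) < d := by
    have : 0 < d := lt_of_le_of_lt (Nat.zero_le _) hd
    exact_mod_cast this
  -- transfer the eigenvalue to `toLin'`
  have hμ' : Module.End.HasEigenvalue
      (Matrix.toLin' (1 + permCycleMatrix t d)) μ := by
    obtain ⟨v, hv⟩ := hμ.exists_hasEigenvector
    set w : Equiv.Perm (Fin t) → ℝ := (WithLp.equiv 2 _) v with hw
    have hw0 : w ≠ 0 := by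
      intro h
      apply hv.2
      have h2 := congrArg (WithLp.equiv 2 (Equiv.Perm (Fin t) → ℝ)).symm h
      simpa [hw] using h2
    have h1 : Matrix.toLin' (1 + permCycleMatrix t d) w = μ • w := by
      have h2 := hv.apply_eq_smul
      calc Matrix.toLin' (1 + permCycleMatrix t d) w
          = (WithLp.equiv 2 _) (Matrix.toEuclideanLin (1 + permCycleMatrix t d) v) :=
            (Matrix.piLp_ofLp_toEuclideanLin _ _).symm
        _ = (WithLp.equiv 2 _) (μ • v) := by rw [h2]
        _ = μ • w := by simp [hw]
    exact Module.End.hasEigenvalue_of_hasEigenvector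
      ⟨Module.End.mem_eigenspace_iff.mpr h1, hw0⟩
  obtain ⟨k, hk⟩ := eigenvalue_mem_ball hμ'
  -- the diagonal entry is 1
  have hdiag : (1 + permCycleMatrix t d) k k = 1 := by
    simp [permCycleMatrix, Matrix.add_apply, Matrix.one_apply_eq]
  rw [hdiag] at hk
  have hdist : |μ - 1| ≤ ∑ j ∈ Finset.univ.erase k, ‖(1 + permCycleMatrix t d) k j‖ := by
    have := Metric.mem_closedBall.mp hk
    rwa [Real.dist_eq] at this
  -- compute the row sum
  have hrow : ∑ j ∈ Finset.univ.erase k, ‖(1 + permCycleMatrix t d) k j‖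
      ≤ (t : ℝ) * ((t : ℝ) - 1) / d := by
    have hnorm : ∀ j ∈ Finset.univ.erase k, ‖(1 + permCycleMatrix t d) k j‖
        = (d : ℝ) ^ (ccount (k⁻¹ * j)) / (d : ℝ) ^ t := by
      intro j hj
      have hjk : k ≠ j := (Finset.ne_of_mem_erase hj).symm
      have : (1 + permCycleMatrix t d) k j
          = (d : ℝ) ^ (cycleCount (k⁻¹ * j)) / (d : ℝ) ^ t := by
        simp [Matrix.add_apply, Matrix.one_apply_ne hjk, permCycleMatrix, hjk]
      rw [this, cycleCount_eq_ccount]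
      rw [Real.norm_eq_abs, abs_of_nonneg]
      positivity
    refine le_trans (le_of_eq (Finset.sum_congr rfl hnorm)) ?_
    -- reindex by π = k⁻¹ * j
    have hre : ∑ j ∈ Finset.univ.erase k, (d : ℝ) ^ (ccount (k⁻¹ * j)) / (d : ℝ) ^ t
        = ∑ π ∈ Finset.univ.erase (1 : Perm (Fin t)), (d : ℝ) ^ (ccount π) / (d : ℝ) ^ t := by
      apply Finset.sum_nbij' (fun j => k⁻¹ * j) (fun π => k * π)
      · intro j hj
        simp only [Finset.mem_erase, Finset.mem_univ, and_true] at hj ⊢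
        intro h; apply hj; rw [inv_mul_eq_one] at h; exact h.symm
      · intro π hπ
        simp only [Finset.mem_erase, Finset.mem_univ, and_true] at hπ ⊢
        intro h; apply hπ
        have := congrArg (fun x => k⁻¹ * x) h
        simpa using this
      · intro j hj; simp
      · intro π hπ; simp
      · intro j hj; rfl
    rw [hre]
    -- the sum over non-identity permutations
    have hN : (∑ π ∈ Finset.univ.erase (1 : Perm (Fin t)), d ^ ccount π) + d ^ t
        = ∏ i ∈ range t, (d + i) := by
      rw [← sum_pow_ccount d t, ← Finset.add_sum_erase _ _ (Finset.mem_univ 1)]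
      rw [ccount_one, Fintype.card_fin]
      ring
    have hNle : (∑ π ∈ Finset.univ.erase (1 : Perm (Fin t)), d ^ ccount π)
        ≤ t * (t - 1) * d ^ (t - 1) := by
      have h2 := prod_le d t (by nlinarith [sq_nonneg t, hd, Nat.pow_two t ▸ hd.le])
      omega
    have hcast : ∑ π ∈ Finset.univ.erase (1 : Perm (Fin t)),
        (d : ℝ) ^ (ccount π) / (d : ℝ) ^ t
        = ((∑ π ∈ Finset.univ.erase (1 : Perm (Fin t)), d ^ ccount π : ℕ) : ℝ) / (d : ℝ) ^ t := by
      rw [Nat.cast_sum, Finset.sum_div]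
      exact Finset.sum_congr rfl fun π _ => by push_cast; ring
    rw [hcast]
    have hNle' : ((∑ π ∈ Finset.univ.erase (1 : Perm (Fin t)), d ^ ccount π : ℕ) : ℝ)
        ≤ (t : ℝ) * ((t : ℝ) - 1) * (d : ℝ) ^ (t - 1) := by
      calc ((∑ π ∈ Finset.univ.erase (1 : Perm (Fin t)), d ^ ccount π : ℕ) : ℝ)
          ≤ ((t * (t - 1) * d ^ (t - 1) : ℕ) : ℝ) := by exact_mod_cast hNle
        _ = (t : ℝ) * ((t : ℝ) - 1) * (d : ℝ) ^ (t - 1) := by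
            push_cast [Nat.cast_sub ht]
            ring
    rw [div_le_div_iff₀ (by positivity) hd0]
    calc ((∑ π ∈ Finset.univ.erase (1 : Perm (Fin t)), d ^ ccount π : ℕ) : ℝ) * d
        ≤ ((t : ℝ) * ((t : ℝ) - 1) * (d : ℝ) ^ (t - 1)) * d := by
          apply mul_le_mul_of_nonneg_right hNle' hd0.le
      _ = (t : ℝ) * ((t : ℝ) - 1) * (d : ℝ) ^ t := by
          rw [mul_assoc, ← pow_succ]
          congr 2
          omega
  have := abs_le.mp (le_trans hdist hrow)
  constructor <;> linarith [this.1, this.2]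
end

section
/- Fix a positive integer t and 0 < ε < 1/(2t). Let N be the t! × t! real symmetric matrix indexed by permutations of [t] with N_{σσ'} = ε^{t - f(σ⁻¹σ')} for σ ≠ σ' and N_{σσ} = 0, where f(π) is the number of fixed points of π. Then the operator norm of N is at most 2ε²t². -/
/-- The number of fixed points of a permutation of `Fin t`. -/
def fixedCount {t : ℕ} (σ : Equiv.Perm (Fin t)) : ℕ :=
  (Finset.univ.filter fun x => σ x = x).card

/-- The `t! × t!` matrix indexed by permutations of `[t]` with entries
`N_{σσ'} = ε^(t - f(σ⁻¹σ'))` off-diagonal and `0` on the diagonal, where `f` is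
the number of fixed points. -/
noncomputable def permFixedMatrix (t : ℕ) (ε : ℝ) :
    Matrix (Equiv.Perm (Fin t)) (Equiv.Perm (Fin t)) ℝ :=
  fun σ σ' => if σ = σ' then 0 else ε ^ (t - fixedCount (σ⁻¹ * σ'))

open Finset Equiv in
-- counting lemma: number of perms of Fin t with support card = k is at most t^k
lemma count_supp_le (t k : ℕ) (ht : 0 < t) :
    ((Finset.univ : Finset (Equiv.Perm (Fin t))).filter
      fun π => π.support.card = k).card ≤ t ^ k := by
  classical
  have : t ^ k = Fintype.card (Fin k → Fin t) := by simp
  rw [this, ← Finset.card_univ]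
  apply Finset.card_le_card_of_injOn
    (fun π => fun i : Fin k =>
      if h : π.support.card = k then π (π.support.orderEmbOfFin h i) else ⟨0, ht⟩)
    (fun _ _ => Finset.mem_univ _)
  intro π hπ π' hπ' hFF
  simp only [Finset.mem_coe, Finset.mem_filter, Finset.mem_univ, true_and] at hπ hπ'
  simp only [dif_pos hπ, dif_pos hπ'] at hFF
  -- the image of the map determines the support
  have himg : ∀ (ρ : Equiv.Perm (Fin t)) (h : ρ.support.card = k),
      Finset.image (fun i : Fin k => ρ (ρ.support.orderEmbOfFin h i)) Finset.univ
        = ρ.support := by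
    intro ρ h
    apply Finset.eq_of_subset_of_card_le
    · intro x hx
      simp only [Finset.mem_image, Finset.mem_univ, true_and] at hx
      obtain ⟨i, rfl⟩ := hx
      exact (Equiv.Perm.apply_mem_support).2 (Finset.orderEmbOfFin_mem _ h i)
    · rw [Finset.card_image_of_injective _
        (fun a b hab => (Finset.orderEmbOfFin _ h).injective (ρ.injective hab))]
      simp [h]
  have hs : π.support = π'.support := by
    rw [← himg π hπ, ← himg π' hπ', hFF]
  have he : ∀ i : Fin k, π.support.orderEmbOfFin hπ i = π'.support.orderEmbOfFin hπ' i := by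
    intro i
    simp only [Finset.orderEmbOfFin_apply, hs]
  apply Equiv.ext
  intro x
  by_cases hx : x ∈ π.support
  · have : x ∈ Set.range (π.support.orderEmbOfFin hπ) := by
      rw [Finset.range_orderEmbOfFin]; exact hx
    obtain ⟨i, rfl⟩ := this
    have := congrFun hFF i
    rw [this, he i]
  · have hx' : x ∉ π'.support := hs ▸ hx
    rw [Equiv.Perm.notMem_support.1 hx, Equiv.Perm.notMem_support.1 hx']

lemma sub_fixedCount {t : ℕ} (π : Equiv.Perm (Fin t)) :
    t - fixedCount π = π.support.card := by
  have h := Finset.card_filter_add_card_filter_not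
    (s := (Finset.univ : Finset (Fin t))) (p := fun x => π x = x)
  simp only [Finset.card_univ, Fintype.card_fin] at h
  have hsupp : π.support = Finset.univ.filter (fun x => ¬ π x = x) := rfl
  rw [hsupp]
  unfold fixedCount
  omega

lemma geom_half (m : ℕ) : ∑ j ∈ Finset.range m, ((1:ℝ)/2) ^ j ≤ 2 := by
  have := geom_sum_eq (by norm_num : ((1:ℝ)/2) ≠ 1) m
  rw [this]
  have h2 : (0:ℝ) ≤ (1/2:ℝ)^m := by positivity
  have h3 : ((1:ℝ)/2)^m ≤ 1 := pow_le_one₀ (by norm_num) (by norm_num)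
  rw [div_le_iff_of_neg (by norm_num : ((1:ℝ)/2 - 1) < 0)]
  linarith

lemma rowsum (t : ℕ) (ht : 0 < t) (ε : ℝ) (hε0 : 0 < ε) (hε : ε < 1 / (2 * t))
    (σ : Equiv.Perm (Fin t)) :
    ∑ σ', permFixedMatrix t ε σ σ' ≤ 2 * ε ^ 2 * (t:ℝ) ^ 2 := by
  classical
  have ht' : (0:ℝ) < t := by exact_mod_cast ht
  have hr : (t:ℝ) * ε < 1/2 := by
    have := (mul_lt_mul_of_pos_left hε ht')
    rw [mul_one_div] at this
    calc (t:ℝ) * ε < t / (2*t) := this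
    _ = 1/2 := by field_simp
  have hr0 : 0 ≤ (t:ℝ) * ε := by positivity
  -- reindex by π = σ⁻¹σ'
  have h1 : ∑ σ', permFixedMatrix t ε σ σ'
      = ∑ π : Equiv.Perm (Fin t), (if π = 1 then 0 else ε ^ π.support.card) := by
    rw [← Equiv.sum_comp (Equiv.mulLeft σ)]
    apply Finset.sum_congr rfl
    intro π _
    simp only [permFixedMatrix, Equiv.coe_mulLeft, inv_mul_cancel_left]
    rw [sub_fixedCount]
    congr 1
    simp [eq_comm, mul_eq_left]
  rw [h1]
  set s : Finset (Equiv.Perm (Fin t)) := Finset.univ.filter (fun π => ¬ π = 1) with hsdef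
  have h2 : ∑ π : Equiv.Perm (Fin t), (if π = 1 then 0 else ε ^ π.support.card)
      = ∑ π ∈ s, ε ^ π.support.card := by
    rw [Finset.sum_filter]
    apply Finset.sum_congr rfl
    intro π _
    by_cases h : π = 1 <;> simp [h]
  rw [h2]
  have hmaps : ∀ π ∈ s, π.support.card ∈ Finset.Icc 2 t := by
    intro π hπ
    simp only [hsdef, Finset.mem_filter] at hπ
    refine Finset.mem_Icc.2 ⟨Equiv.Perm.two_le_card_support_of_ne_one hπ.2, ?_⟩
    simpa using Finset.card_le_univ π.support
  rw [← Finset.sum_fiberwise_of_maps_to hmaps]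
  have hstep : ∀ k ∈ Finset.Icc 2 t,
      (∑ π ∈ s.filter (fun π => π.support.card = k), ε ^ π.support.card)
        ≤ (1/2:ℝ)^(k-2) * (((t:ℝ)*ε)^2) := by
    intro k hk
    obtain ⟨hk2, hkt⟩ := Finset.mem_Icc.1 hk
    have : (∑ π ∈ s.filter (fun π => π.support.card = k), ε ^ π.support.card)
        = (s.filter (fun π => π.support.card = k)).card * ε ^ k := by
      rw [Finset.sum_congr rfl (fun π hπ => by
        rw [(Finset.mem_filter.1 hπ).2]), Finset.sum_const, nsmul_eq_mul]
    rw [this]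
    have hcard : ((s.filter (fun π => π.support.card = k)).card : ℝ) ≤ (t:ℝ) ^ k := by
      have hsub : s.filter (fun π => π.support.card = k)
          ⊆ Finset.univ.filter (fun π => π.support.card = k) := by
        intro π hπ
        simp only [Finset.mem_filter, Finset.mem_univ, true_and]
        exact (Finset.mem_filter.1 hπ).2
      have := (Finset.card_le_card hsub).trans (count_supp_le t k ht)
      exact_mod_cast this
    have hε' : (0:ℝ) ≤ ε ^ k := by positivity
    calc ((s.filter (fun π => π.support.card = k)).card : ℝ) * ε ^ k
        ≤ (t:ℝ)^k * ε^k := by gcongr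
      _ = ((t:ℝ)*ε)^k := by rw [mul_pow]
      _ = ((t:ℝ)*ε)^(k-2) * ((t:ℝ)*ε)^2 := by rw [← pow_add]; congr 1; omega
      _ ≤ (1/2:ℝ)^(k-2) * (((t:ℝ)*ε)^2) :=
          mul_le_mul_of_nonneg_right (pow_le_pow_left₀ hr0 hr.le _) (by positivity)
  calc ∑ k ∈ Finset.Icc 2 t, ∑ π ∈ s.filter (fun π => π.support.card = k), ε ^ π.support.card
      ≤ ∑ k ∈ Finset.Icc 2 t, (1/2:ℝ)^(k-2) * (((t:ℝ)*ε)^2) :=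
        Finset.sum_le_sum hstep
    _ = (∑ k ∈ Finset.Icc 2 t, (1/2:ℝ)^(k-2)) * (((t:ℝ)*ε)^2) := by
        rw [Finset.sum_mul]
    _ ≤ 2 * (((t:ℝ)*ε)^2) := by
        apply mul_le_mul_of_nonneg_right _ (by positivity)
        calc ∑ k ∈ Finset.Icc 2 t, (1/2:ℝ)^(k-2)
            = ∑ j ∈ Finset.range (t+1-2), (1/2:ℝ)^j := by
              rw [← Finset.Ico_add_one_right_eq_Icc, Finset.sum_Ico_eq_sum_range]
              exact Finset.sum_congr rfl (fun j _ => by congr 1; omega)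
          _ ≤ 2 := geom_half _
    _ = 2 * ε^2 * (t:ℝ)^2 := by ring

lemma fixedCount_inv {t : ℕ} (π : Equiv.Perm (Fin t)) :
    fixedCount π⁻¹ = fixedCount π := by
  unfold fixedCount
  congr 1
  apply Finset.filter_congr
  intro x _
  constructor
  · intro h; conv_lhs => rw [← h]
    simp
  · intro h; conv_lhs => rw [← h]
    simp

lemma permFixedMatrix_symm (t : ℕ) (ε : ℝ) (σ σ' : Equiv.Perm (Fin t)) :
    permFixedMatrix t ε σ σ' = permFixedMatrix t ε σ' σ := by
  unfold permFixedMatrix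
  by_cases h : σ = σ'
  · simp [h]
  · rw [if_neg h, if_neg (Ne.symm h)]
    congr 2
    rw [show σ'⁻¹ * σ = (σ⁻¹ * σ')⁻¹ by group, fixedCount_inv]

lemma permFixedMatrix_nonneg (t : ℕ) (ε : ℝ) (hε0 : 0 < ε) (σ σ' : Equiv.Perm (Fin t)) :
    0 ≤ permFixedMatrix t ε σ σ' := by
  unfold permFixedMatrix
  split <;> positivity

/-- For `0 < ε < 1/(2t)`, the operator norm of the matrix `N` with entries
`N_{σσ'} = ε^(t - f(σ⁻¹σ'))` off the diagonal and zero diagonal is at most `2ε²t²`. -/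
theorem stmt_4 (t : ℕ) (ht : 0 < t) (ε : ℝ) (hε0 : 0 < ε) (hε : ε < 1 / (2 * t)) :
    ∀ x : EuclideanSpace ℝ (Equiv.Perm (Fin t)),
      ‖Matrix.toEuclideanLin (permFixedMatrix t ε) x‖ ≤
        2 * ε ^ 2 * (t : ℝ) ^ 2 * ‖x‖ := by
  intro x
  classical
  set M := permFixedMatrix t ε with hM
  set R : ℝ := 2 * ε ^ 2 * (t:ℝ) ^ 2 with hR
  have hR0 : 0 ≤ R := by positivity
  set y := Matrix.toEuclideanLin M x with hy
  have hyν : ∀ σ, y σ = ∑ σ', M σ σ' * x σ' := by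
    intro σ
    rfl
  have hnn := permFixedMatrix_nonneg t ε hε0
  have hrow := rowsum t ht ε hε0 hε
  -- key quadratic bound
  have key : ∑ σ, (y σ)^2 ≤ R^2 * ∑ σ, (x σ)^2 := by
    have step1 : ∀ σ, (y σ)^2 ≤ R * ∑ σ', M σ σ' * (x σ')^2 := by
      intro σ
      have cs := Finset.sum_sq_le_sum_mul_sum_of_sq_eq_mul Finset.univ
        (r := fun σ' => M σ σ' * x σ') (f := fun σ' => M σ σ')
        (g := fun σ' => M σ σ' * (x σ')^2)
        (fun i _ => hnn σ i) (fun i _ => mul_nonneg (hnn σ i) (sq_nonneg _))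
        (fun i _ => by ring)
      rw [hyν σ]
      refine cs.trans ?_
      have h1 : (0:ℝ) ≤ ∑ σ', M σ σ' * (x σ')^2 :=
        Finset.sum_nonneg (fun i _ => mul_nonneg (hnn σ i) (sq_nonneg _))
      exact mul_le_mul_of_nonneg_right (hrow σ) h1
    calc ∑ σ, (y σ)^2 ≤ ∑ σ, R * ∑ σ', M σ σ' * (x σ')^2 :=
          Finset.sum_le_sum (fun σ _ => step1 σ)
      _ = R * ∑ σ', (∑ σ, M σ σ') * (x σ')^2 := by
          rw [← Finset.mul_sum, Finset.sum_comm]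
          congr 1
          exact Finset.sum_congr rfl (fun σ' _ => by rw [Finset.sum_mul])
      _ ≤ R * ∑ σ', R * (x σ')^2 := by
          apply mul_le_mul_of_nonneg_left _ hR0
          apply Finset.sum_le_sum
          intro σ' _
          apply mul_le_mul_of_nonneg_right _ (sq_nonneg _)
          calc ∑ σ, M σ σ' = ∑ σ, M σ' σ :=
                Finset.sum_congr rfl (fun σ _ => permFixedMatrix_symm t ε σ σ')
            _ ≤ R := hrow σ'
      _ = R^2 * ∑ σ, (x σ)^2 := by rw [← Finset.mul_sum]; ring
  -- pass to norms
  have hny : ‖y‖ = Real.sqrt (∑ σ, (y σ)^2) := by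
    rw [EuclideanSpace.norm_eq]
    congr 1
    exact Finset.sum_congr rfl (fun σ _ => by rw [Real.norm_eq_abs, sq_abs])
  have hnx : ‖x‖ = Real.sqrt (∑ σ, (x σ)^2) := by
    rw [EuclideanSpace.norm_eq]
    congr 1
    exact Finset.sum_congr rfl (fun σ _ => by rw [Real.norm_eq_abs, sq_abs])
  rw [hny, hnx]
  calc Real.sqrt (∑ σ, (y σ)^2) ≤ Real.sqrt (R^2 * ∑ σ, (x σ)^2) := Real.sqrt_le_sqrt key
    _ = R * Real.sqrt (∑ σ, (x σ)^2) := by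
        rw [Real.sqrt_mul (sq_nonneg R), Real.sqrt_sq hR0]
end

section
/- Let V be a finite-dimensional complex inner product space, W, W' subspaces, and ε > 0 with 4√ε + 2ε < 1. If W and W' are everywhere close within ε (each is everywhere close to the other within ε), then the orthogonal complements W^⊥ and (W')^⊥ are everywhere close within 2√ε. -/
open scoped ComplexInnerProductSpace in
lemma stmt_10_aux {V : Type*} [NormedAddCommGroup V] [InnerProductSpace ℂ V]
    [FiniteDimensional ℂ V] (W W' : Submodule ℂ V) (ε : ℝ) (hε0 : 0 < ε) (hε4 : ε ≤ 4)
    (h2 : ∀ w' ∈ W', ‖w'‖ = 1 → ∃ w ∈ W, ‖w' - w‖ ≤ ε) :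
    ∀ u ∈ Wᗮ, ‖u‖ = 1 → ∃ v ∈ W'ᗮ, ‖u - v‖ ≤ 2 * Real.sqrt ε := by
  intro u huW hu1
  set p : V := (W'.orthogonalProjectionOnto u : V) with hp
  have hpW' : p ∈ W' := (W'.orthogonalProjectionOnto u).2
  have hqmem : u - p ∈ W'ᗮ := by
    have := W'.sub_starProjection_mem_orthogonal u; rwa [Submodule.starProjection_apply] at this
  have hpε : ‖p‖ ≤ ε := by
    by_cases hp0 : p = 0
    · simp [hp0, hε0.le]
    · have hn : (0:ℝ) < ‖p‖ := norm_pos_iff.mpr hp0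
      set w : V := ((‖p‖:ℂ)⁻¹) • p with hw
      have hwW' : w ∈ W' := W'.smul_mem _ hpW'
      have hw1 : ‖w‖ = 1 := by
        rw [hw, norm_smul]
        simp [norm_inv, Complex.norm_real, abs_of_pos hn]
        field_simp
      obtain ⟨w₀, hw₀W, hw₀⟩ := h2 w hwW' hw1
      have hinner0 : ⟪u, w₀⟫ = 0 := by
        have := (Submodule.mem_orthogonal W u).mp huW w₀ hw₀W
        simpa [inner_conj_symm] using congrArg (starRingEnd ℂ) this
      have hup : ⟪u, p⟫ = (‖p‖:ℂ)^2 := by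
        have h0 : ⟪p, u - p⟫ = 0 := (Submodule.mem_orthogonal W' (u - p)).mp hqmem p hpW'
        have h0' : ⟪u - p, p⟫ = 0 := by
          simpa [inner_conj_symm] using congrArg (starRingEnd ℂ) h0
        have : ⟪u, p⟫ = ⟪p, p⟫ + ⟪u - p, p⟫ := by
          rw [← inner_add_left]; congr 1; abel
        rw [this, h0', add_zero, inner_self_eq_norm_sq_to_K]
        norm_cast
      have key : ⟪u, p⟫ = ⟪u, p - (‖p‖:ℂ) • w₀⟫ := by
        rw [inner_sub_right, inner_smul_right, hinner0, mul_zero, sub_zero]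
      have hfac : p - (‖p‖:ℂ) • w₀ = (‖p‖:ℂ) • (w - w₀) := by
        rw [hw, smul_sub, smul_smul]
        congr 1
        rw [mul_inv_cancel₀, one_smul]
        exact_mod_cast hn.ne'
      have hbound : ‖p‖^2 ≤ ‖p‖ * ε := by
        have h1 : ‖p‖^2 = ‖⟪u, p - (‖p‖:ℂ) • w₀⟫‖ := by
          rw [← key, hup]
          simp [abs_of_pos hn]
        have h2' : ‖⟪u, p - (‖p‖:ℂ) • w₀⟫‖ ≤ ‖u‖ * ‖p - (‖p‖:ℂ) • w₀‖ :=
          norm_inner_le_norm _ _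
        have h3 : ‖p - (‖p‖:ℂ) • w₀‖ = ‖p‖ * ‖w - w₀‖ := by
          rw [hfac, norm_smul]
          simp [abs_of_pos hn]
        calc ‖p‖^2 = ‖⟪u, p - (‖p‖:ℂ) • w₀⟫‖ := h1
          _ ≤ ‖u‖ * ‖p - (‖p‖:ℂ) • w₀‖ := h2'
          _ = ‖p‖ * ‖w - w₀‖ := by rw [hu1, one_mul, h3]
          _ ≤ ‖p‖ * ε := by exact mul_le_mul_of_nonneg_left hw₀ hn.le
      nlinarith
  refine ⟨u - p, hqmem, ?_⟩
  have : u - (u - p) = p := by abel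
  rw [this]
  have hsq : Real.sqrt ε * Real.sqrt ε = ε := Real.mul_self_sqrt hε0.le
  have hs0 : 0 ≤ Real.sqrt ε := Real.sqrt_nonneg ε
  nlinarith [hsq, hs0, hpε, hε4]

/-- If subspaces `W`, `W'` of a finite-dimensional complex inner product space
are everywhere close within `ε` (each unit vector of either is within `ε` of the
other subspace), and `4√ε + 2ε < 1`, then the orthogonal complements `W^⊥` and
`(W')^⊥` are everywhere close within `2√ε`. -/
theorem stmt_10 {V : Type*} [NormedAddCommGroup V] [InnerProductSpace ℂ V]
    [FiniteDimensional ℂ V] (W W' : Submodule ℂ V) (ε : ℝ) (hε0 : 0 < ε)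
    (hsmall : 4 * Real.sqrt ε + 2 * ε < 1)
    (h1 : ∀ w ∈ W, ‖w‖ = 1 → ∃ w' ∈ W', ‖w - w'‖ ≤ ε)
    (h2 : ∀ w' ∈ W', ‖w'‖ = 1 → ∃ w ∈ W, ‖w' - w‖ ≤ ε) :
    (∀ u ∈ Wᗮ, ‖u‖ = 1 → ∃ v ∈ W'ᗮ, ‖u - v‖ ≤ 2 * Real.sqrt ε) ∧
    (∀ v ∈ W'ᗮ, ‖v‖ = 1 → ∃ u ∈ Wᗮ, ‖v - u‖ ≤ 2 * Real.sqrt ε) := by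
  have hε4 : ε ≤ 4 := by nlinarith [Real.sqrt_nonneg ε]
  exact ⟨stmt_10_aux W W' ε hε0 hε4 h2, stmt_10_aux W' W ε hε0 hε4 h1⟩
end

section
/- Let d > t² and D ≥ d. For each σ ∈ S_t let (α_1)_σ, (α_2)_σ be the normalized permutation operators D^{-t/2}Σ_σ on (ℂ^D)^{⊗t} and d^{-t/2}Σ_σ on (ℂ^d)^{⊗t} respectively, and α_σ = (α_1)_σ ⊗ (α_2)_σ. Then for any coefficients a_σ ∈ ℂ, if β = Σ_σ a_σ α_σ has Hilbert-Schmidt norm 1, then Σ_σ |a_σ|² lies in the interval [1/(1 + t(t-1)/(Dd)), 1/(1 - t(t-1)/(Dd))]. -/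
open Matrix Kronecker

/-- The unitary `Σ_σ` on `(ℂ^d)^{⊗t}` permuting the tensor factors according to
`σ ∈ S_t`, written as a matrix on the index set `Fin t → Fin d`. -/
def permTensor (d t : ℕ) (σ : Equiv.Perm (Fin t)) :
    Matrix (Fin t → Fin d) (Fin t → Fin d) ℂ :=
  fun r c => if r = c ∘ σ.symm then 1 else 0

/-- The normalized permutation operator `α_σ = d^{-t/2} Σ_σ`. -/
noncomputable def alphaMat (d t : ℕ) (σ : Equiv.Perm (Fin t)) :
    Matrix (Fin t → Fin d) (Fin t → Fin d) ℂ :=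
  ((Real.sqrt d : ℂ))⁻¹ ^ t • permTensor d t σ

/-- Number of functions `Fin t → X` invariant under precomposition with `π`. -/
noncomputable def fixCount (t : ℕ) (X : Type*) [Fintype X] [DecidableEq X]
    (π : Equiv.Perm (Fin t)) : ℕ :=
  Fintype.card {f : Fin t → X // f ∘ ⇑π = f}

section fixCountLemmas

variable {t : ℕ} {X Y : Type*} [Fintype X] [DecidableEq X] [Fintype Y] [DecidableEq Y]

lemma fixCount_one : fixCount t X 1 = Fintype.card X ^ t := by
  rw [fixCount]
  rw [Fintype.card_congr (Equiv.subtypeUnivEquiv (fun f => by simp [Function.comp_def]))]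
  simp [Fintype.card_fun]

lemma fixCount_prod (π : Equiv.Perm (Fin t)) :
    fixCount t (X × Y) π = fixCount t X π * fixCount t Y π := by
  rw [fixCount, fixCount, fixCount, ← Fintype.card_prod]
  apply Fintype.card_congr
  refine
    { toFun := fun f => ⟨⟨fun i => (f.1 i).1, funext fun i => congrArg Prod.fst (congrFun f.2 i)⟩,
        ⟨fun i => (f.1 i).2, funext fun i => congrArg Prod.snd (congrFun f.2 i)⟩⟩
      invFun := fun gh => ⟨fun i => (gh.1.1 i, gh.2.1 i),
        funext fun i => Prod.ext (congrFun gh.1.2 i) (congrFun gh.2.2 i)⟩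
      left_inv := fun f => by ext i <;> rfl
      right_inv := fun gh => by
        refine Prod.ext (Subtype.ext ?_) (Subtype.ext ?_) <;> rfl }

lemma fixCount_decompose (p : Fin (t + 1)) (e : Equiv.Perm (Fin t)) :
    fixCount (t + 1) X (Equiv.Perm.decomposeFin.symm (p, e)) =
      if p = 0 then Fintype.card X * fixCount t X e else fixCount t X e := by
  set π := Equiv.Perm.decomposeFin.symm (p, e) with hπ
  have hπ0 : π 0 = p := Equiv.Perm.decomposeFin_symm_apply_zero p e
  have hπs : ∀ x : Fin t, π x.succ = Equiv.swap 0 p (e x).succ :=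
    fun x => Equiv.Perm.decomposeFin_symm_apply_succ e p x
  by_cases hp : p = 0
  · subst hp
    simp only [if_pos rfl]
    rw [fixCount, fixCount, ← Fintype.card_prod]
    apply Fintype.card_congr
    refine
      { toFun := fun f => ⟨f.1 0, ⟨f.1 ∘ Fin.succ, funext fun i => ?_⟩⟩
        invFun := fun xg => ⟨Fin.cases xg.1 xg.2.1, funext fun z => ?_⟩
        left_inv := fun f => ?_
        right_inv := fun xg => ?_ }
    · have := congrFun f.2 i.succ
      simpa [hπs i, Equiv.swap_self] using this
    · induction z using Fin.cases with
      | zero => simp [hπ0]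
      | succ i =>
        have he := congrFun xg.2.2 i
        simp only [Function.comp_apply] at he
        simp [hπs i, Equiv.swap_self, he]
    · ext z
      · induction z using Fin.cases with
        | zero => simp
        | succ i => simp
    · refine Prod.ext rfl (Subtype.ext ?_)
      funext i; simp
  · rw [if_neg hp]
    rw [fixCount, fixCount]
    apply Fintype.card_congr
    set q := p.pred hp with hq
    have hqp : q.succ = p := Fin.succ_pred p hp
    refine
      { toFun := fun f => ⟨f.1 ∘ Fin.succ, funext fun i => ?_⟩
        invFun := fun g => ⟨Fin.cases (g.1 q) g.1, funext fun z => ?_⟩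
        left_inv := fun f => ?_
        right_inv := fun g => ?_ }
    · -- show f.1 (succ (e i)) = f.1 (succ i) given f∘π = f
      have h0 : f.1 p = f.1 0 := by rw [← hπ0]; exact congrFun f.2 0
      have hs := congrFun f.2 i.succ
      simp only [Function.comp_apply, hπs i] at hs
      simp only [Function.comp_apply]
      by_cases h : e i = q
      · rw [h, hqp, Equiv.swap_apply_right] at hs
        have hvq : f.1 (e i).succ = f.1 0 := by rw [h, hqp, h0]
        rw [hvq, hs]
      · have hne : (e i).succ ≠ p := fun hc => h (Fin.succ_injective _ (hc.trans hqp.symm))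
        rw [Equiv.swap_apply_of_ne_of_ne (Fin.succ_ne_zero _) hne] at hs
        exact hs
    · induction z using Fin.cases with
      | zero => simp [hπ0, ← hqp]
      | succ i =>
        have he := congrFun g.2 i
        simp only [Function.comp_apply] at he
        simp only [Function.comp_apply, hπs i]
        by_cases h : e i = q
        · rw [h, hqp, Equiv.swap_apply_right]
          simp only [Fin.cases_zero, Fin.cases_succ]
          rw [← h, he]
        · have hne : (e i).succ ≠ p := fun hc => h (Fin.succ_injective _ (hc.trans hqp.symm))
          rw [Equiv.swap_apply_of_ne_of_ne (Fin.succ_ne_zero _) hne]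
          simp [← he]
    · have h0 : f.1 p = f.1 0 := by rw [← hπ0]; exact congrFun f.2 0
      ext z
      induction z using Fin.cases with
      | zero => simp [← h0, ← hqp]
      | succ i => simp
    · exact Subtype.ext (funext fun i => by simp)

lemma sum_fixCount (t : ℕ) :
    ∑ π : Equiv.Perm (Fin t), fixCount t X π =
      ∏ k ∈ Finset.range t, (Fintype.card X + k) := by
  induction t with
  | zero =>
    have h1 : ∀ π : Equiv.Perm (Fin 0), fixCount 0 X π = 1 := by
      intro π
      rw [fixCount]
      refine Fintype.card_eq_one_of_forall_eq (i := ⟨fun i => i.elim0, funext fun i => i.elim0⟩) ?_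
      rintro ⟨f, hf⟩
      exact Subtype.ext (funext fun i => i.elim0)
    simp only [h1, Finset.sum_const, Finset.card_univ, smul_eq_mul, mul_one,
      Finset.range_zero, Finset.prod_empty]
    simp [Fintype.card_perm]
  | succ t ih =>
    rw [← Equiv.sum_comp (Equiv.Perm.decomposeFin (n := t)).symm
      (fun π => fixCount (t+1) X π)]
    rw [Fintype.sum_prod_type]
    have : ∀ p : Fin (t+1), ∑ e : Equiv.Perm (Fin t),
        fixCount (t+1) X (Equiv.Perm.decomposeFin.symm (p, e)) =
        (if p = 0 then Fintype.card X else 1) * ∑ e : Equiv.Perm (Fin t), fixCount t X e := by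
      intro p
      rw [Finset.mul_sum]
      refine Finset.sum_congr rfl fun e _ => ?_
      rw [fixCount_decompose]
      split <;> simp
    simp only [this]
    rw [← Finset.sum_mul]
    rw [Fin.sum_univ_succ]
    simp only [if_pos rfl, Fin.succ_ne_zero, if_neg, ite_false]
    simp only [Finset.sum_const, Finset.card_univ, Fintype.card_fin, smul_eq_mul, mul_one]
    rw [ih, Finset.prod_range_succ]
    simp only [if_true]
    ring

end fixCountLemmas

lemma prod_range_add_le (s N : ℕ) (h : s * (s + 1) ≤ N) :
    (∏ k ∈ Finset.range (s + 1), (N + k)) * N ≤ N ^ (s + 2) + (s + 1) * s * N ^ (s + 1) := by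
  induction s with
  | zero => simpa [pow_succ] using Nat.le_add_right _ _
  | succ s ih =>
    have h' : s * (s + 1) ≤ N := le_trans (by nlinarith) h
    have ih' := ih h'
    rw [Finset.prod_range_succ]
    calc (∏ k ∈ Finset.range (s+1), (N + k)) * (N + (s+1)) * N
        = ((∏ k ∈ Finset.range (s+1), (N + k)) * N) * (N + (s+1)) := by ring
      _ ≤ (N ^ (s + 2) + (s + 1) * s * N ^ (s + 1)) * (N + (s+1)) :=
          Nat.mul_le_mul_right _ ih'
      _ ≤ N ^ (s + 3) + (s + 2) * (s + 1) * N ^ (s + 2) := by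
          have key : (s + 1) * (s + 1) * s * N ^ (s + 1) ≤ (s + 1) * N ^ (s + 2) := by
            have h2 : (s + 1) * s ≤ N := le_trans (by nlinarith) h
            calc (s + 1) * (s + 1) * s * N ^ (s + 1)
                = (s + 1) * ((s + 1) * s) * N ^ (s + 1) := by ring
              _ ≤ (s + 1) * N * N ^ (s + 1) :=
                  Nat.mul_le_mul_right _ (Nat.mul_le_mul_left _ h2)
              _ = (s + 1) * N ^ (s + 2) := by ring
          calc (N ^ (s + 2) + (s + 1) * s * N ^ (s + 1)) * (N + (s + 1))
              = N ^ (s + 3) + ((s + 1) + (s + 1) * s) * N ^ (s + 2)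
                  + (s + 1) * (s + 1) * s * N ^ (s + 1) := by ring
            _ ≤ N ^ (s + 3) + ((s + 1) + (s + 1) * s) * N ^ (s + 2) + (s + 1) * N ^ (s + 2) :=
                Nat.add_le_add_left key _
            _ = N ^ (s + 3) + (s + 2) * (s + 1) * N ^ (s + 2) := by ring

lemma trace_permTensor (n t : ℕ) (σ' σ : Equiv.Perm (Fin t)) :
    ((permTensor n t σ')ᴴ * permTensor n t σ).trace =
      (fixCount t (Fin n) (σ⁻¹ * σ') : ℂ) := by
  have hcond : ∀ r : Fin t → Fin n,
      (r ∘ ⇑σ'.symm = r ∘ ⇑σ.symm) ↔ r ∘ ⇑(σ⁻¹ * σ') = r := by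
    intro r
    constructor
    · intro h
      funext y
      have := congrFun h (σ' y)
      simp only [Function.comp_apply, Equiv.symm_apply_apply] at this
      simpa [Equiv.Perm.mul_apply, Equiv.Perm.inv_def] using this.symm
    · intro h
      funext x
      have := congrFun h (σ'.symm x)
      simpa [Equiv.Perm.mul_apply, Equiv.Perm.inv_def] using this.symm
  rw [Matrix.trace]
  have hdiag : ∀ r, ((permTensor n t σ')ᴴ * permTensor n t σ).diag r
      = if r ∘ ⇑(σ⁻¹ * σ') = r then (1:ℂ) else 0 := by
    intro r
    rw [Matrix.diag_apply, Matrix.mul_apply]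
    simp only [Matrix.conjTranspose_apply, permTensor]
    have : ∀ c, star (if c = r ∘ ⇑σ'.symm then (1:ℂ) else 0)
        * (if c = r ∘ ⇑σ.symm then 1 else 0)
        = if c = r ∘ ⇑σ'.symm then (if c = r ∘ ⇑σ.symm then (1:ℂ) else 0) else 0 := by
      intro c
      split <;> split <;> simp
    rw [Finset.sum_congr rfl fun c _ => this c]
    rw [Finset.sum_ite_eq' Finset.univ (r ∘ ⇑σ'.symm)
      (fun c => if c = r ∘ ⇑σ.symm then (1:ℂ) else 0)]
    simp only [Finset.mem_univ, if_true]
    by_cases h : r ∘ ⇑σ'.symm = r ∘ ⇑σ.symm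
    · rw [if_pos h, if_pos ((hcond r).mp h)]
    · rw [if_neg h, if_neg (fun hc => h ((hcond r).mpr hc))]
  rw [Finset.sum_congr rfl fun r _ => hdiag r]
  rw [Finset.sum_boole]
  rw [fixCount, Fintype.card_subtype]

lemma trace_alphaMat (n t : ℕ) (σ' σ : Equiv.Perm (Fin t)) :
    ((alphaMat n t σ')ᴴ * alphaMat n t σ).trace =
      (fixCount t (Fin n) (σ⁻¹ * σ') : ℂ) / (n : ℂ) ^ t := by
  rw [alphaMat, alphaMat, Matrix.conjTranspose_smul, Matrix.smul_mul, Matrix.mul_smul,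
    Matrix.trace_smul, Matrix.trace_smul, trace_permTensor, smul_eq_mul, smul_eq_mul]
  have hstar : star (((Real.sqrt n : ℂ))⁻¹ ^ t) = ((Real.sqrt n : ℂ))⁻¹ ^ t := by
    simp [← Complex.ofReal_inv, ← Complex.ofReal_pow]
  rw [hstar, ← mul_assoc, ← mul_pow, ← mul_inv, ← Complex.ofReal_mul,
    Real.mul_self_sqrt (Nat.cast_nonneg n)]
  push_cast
  rw [inv_pow, inv_mul_eq_div]

lemma conjTranspose_kronecker {l m n p : Type*} (A : Matrix l m ℂ) (B : Matrix n p ℂ) :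
    (A ⊗ₖ B)ᴴ = Aᴴ ⊗ₖ Bᴴ := by
  ext i j
  simp [Matrix.conjTranspose_apply, Matrix.kroneckerMap_apply, mul_comm]

set_option maxHeartbeats 1000000 in
/-- Let `d > t²`, `D ≥ d`, and `α_σ = (α₁)_σ ⊗ (α₂)_σ` with
`(α₁)_σ = D^{-t/2} Σ_σ` and `(α₂)_σ = d^{-t/2} Σ_σ`. If `β = Σ_σ a_σ α_σ` has
Hilbert-Schmidt norm 1, then `Σ_σ |a_σ|²` lies in
`[1/(1 + t(t-1)/(Dd)), 1/(1 - t(t-1)/(Dd))]`. -/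
theorem stmt_11 (t d D : ℕ) (ht : 0 < t) (hd : t ^ 2 < d) (hD : d ≤ D)
    (a : Equiv.Perm (Fin t) → ℂ)
    (β : Matrix ((Fin t → Fin D) × (Fin t → Fin d))
      ((Fin t → Fin D) × (Fin t → Fin d)) ℂ)
    (hβdef : β = ∑ σ : Equiv.Perm (Fin t), a σ • (alphaMat D t σ ⊗ₖ alphaMat d t σ))
    (hβnorm : (βᴴ * β).trace = 1) :
    1 / (1 + (t : ℝ) * ((t : ℝ) - 1) / ((D : ℝ) * d)) ≤ ∑ σ, ‖a σ‖ ^ 2 ∧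
    ∑ σ, ‖a σ‖ ^ 2 ≤ 1 / (1 - (t : ℝ) * ((t : ℝ) - 1) / ((D : ℝ) * d)) := by
  have hd0 : 0 < d := lt_of_le_of_lt (Nat.zero_le _) hd
  have hD0 : 0 < D := lt_of_lt_of_le hd0 hD
  have hNpos : (0:ℝ) < (D:ℝ) * (d:ℝ) := by positivity
  set ε : ℝ := (t : ℝ) * ((t : ℝ) - 1) / ((D : ℝ) * d) with hε
  set w : Equiv.Perm (Fin t) → ℝ :=
    fun π => (fixCount t (Fin D × Fin d) π : ℝ) / ((D:ℝ) * (d:ℝ)) ^ t with hwdef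
  set S : ℝ := ∑ σ, ‖a σ‖ ^ 2 with hSdef
  have hS0 : 0 ≤ S := Finset.sum_nonneg fun σ _ => by positivity
  have hw_nonneg : ∀ π, 0 ≤ w π := fun π => by positivity
  have hcard : (Fintype.card (Fin D × Fin d) : ℝ) = (D:ℝ) * d := by
    simp [Fintype.card_prod]
  have hw1 : w 1 = 1 := by
    rw [hwdef]
    simp only [fixCount_one]
    push_cast
    rw [hcard]
    exact div_self (pow_ne_zero _ hNpos.ne')
  -- trace formula
  have hwC : ∀ π : Equiv.Perm (Fin t), ((w π : ℝ) : ℂ) =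
      (fixCount t (Fin D) π : ℂ) / (D:ℂ)^t * ((fixCount t (Fin d) π : ℂ) / (d:ℂ)^t) := by
    intro π
    rw [div_mul_div_comm, ← Nat.cast_mul, ← fixCount_prod, hwdef]
    push_cast
    rw [mul_pow]
  have key : ∀ σ' σ : Equiv.Perm (Fin t),
      ((a σ' • (alphaMat D t σ' ⊗ₖ alphaMat d t σ'))ᴴ *
        (a σ • (alphaMat D t σ ⊗ₖ alphaMat d t σ))).trace
      = star (a σ') * a σ * ((w (σ⁻¹ * σ') : ℝ) : ℂ) := by
    intro σ' σ
    rw [Matrix.conjTranspose_smul, Matrix.smul_mul, Matrix.mul_smul, Matrix.trace_smul,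
      Matrix.trace_smul, conjTranspose_kronecker, ← Matrix.mul_kronecker_mul,
      Matrix.trace_kronecker, trace_alphaMat, trace_alphaMat, hwC]
    simp only [smul_eq_mul]
    ring
  have h1 : (1:ℂ) = ∑ σ' : Equiv.Perm (Fin t), ∑ σ : Equiv.Perm (Fin t),
      star (a σ') * a σ * ((w (σ⁻¹ * σ') : ℝ) : ℂ) := by
    rw [← hβnorm, hβdef, Matrix.conjTranspose_sum, Finset.sum_mul_sum, Matrix.trace_sum]
    refine Finset.sum_congr rfl fun σ' _ => ?_
    rw [Matrix.trace_sum]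
    exact Finset.sum_congr rfl fun σ _ => key σ' σ
  have hdiagterm : ∀ σ : Equiv.Perm (Fin t),
      star (a σ) * a σ * ((w (σ⁻¹ * σ) : ℝ) : ℂ) = ((‖a σ‖ ^ 2 : ℝ) : ℂ) := by
    intro σ
    rw [inv_mul_cancel, hw1]
    rw [Complex.star_def, mul_comm ((starRingEnd ℂ) (a σ)) (a σ), Complex.mul_conj,
      Complex.normSq_eq_norm_sq]
    push_cast
    ring
  set R : ℂ := ∑ σ' : Equiv.Perm (Fin t), ∑ σ : Equiv.Perm (Fin t),
      (if σ' = σ then 0 else star (a σ') * a σ * ((w (σ⁻¹ * σ') : ℝ) : ℂ)) with hRdef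
  have hSR : (1:ℂ) = ((S : ℝ) : ℂ) + R := by
    rw [h1, hRdef, hSdef]
    push_cast
    rw [← Finset.sum_add_distrib]
    refine Finset.sum_congr rfl fun σ' _ => ?_
    have hsplit : ∀ σ : Equiv.Perm (Fin t),
        star (a σ') * a σ * ((w (σ⁻¹ * σ') : ℝ) : ℂ) =
        (if σ' = σ then star (a σ') * a σ * ((w (σ⁻¹ * σ') : ℝ) : ℂ) else 0) +
        (if σ' = σ then 0 else star (a σ') * a σ * ((w (σ⁻¹ * σ') : ℝ) : ℂ)) := by
      intro σ; split <;> ring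
    rw [Finset.sum_congr rfl fun σ _ => hsplit σ, Finset.sum_add_distrib,
      Finset.sum_ite_eq Finset.univ σ'
        (fun σ => star (a σ') * a σ * ((w (σ⁻¹ * σ') : ℝ) : ℂ)),
      if_pos (Finset.mem_univ σ'), hdiagterm σ']
    push_cast
    ring
  -- the weight sum
  set W : ℝ := ∑ π : Equiv.Perm (Fin t), (if π = 1 then 0 else w π) with hWdef
  have hWrow : ∀ σ' : Equiv.Perm (Fin t),
      ∑ σ : Equiv.Perm (Fin t), (if σ' = σ then 0 else w (σ⁻¹ * σ')) = W := by
    intro σ'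
    refine Fintype.sum_equiv ((Equiv.inv (Equiv.Perm (Fin t))).trans (Equiv.mulRight σ'))
      _ _ fun σ => ?_
    by_cases h : σ' = σ
    · subst h; simp
    · have h2 : σ⁻¹ * σ' ≠ 1 := fun hc => h ((inv_mul_eq_one.mp hc).symm)
      simp [h, h2]
  have hWcol : ∀ σ : Equiv.Perm (Fin t),
      ∑ σ' : Equiv.Perm (Fin t), (if σ' = σ then 0 else w (σ⁻¹ * σ')) = W := by
    intro σ
    refine Fintype.sum_equiv (Equiv.mulLeft σ⁻¹) _ _ fun σ' => ?_
    by_cases h : σ' = σ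
    · subst h; simp
    · have h2 : σ⁻¹ * σ' ≠ 1 := fun hc => h ((inv_mul_eq_one.mp hc).symm)
      simp [h, h2]
  -- bound on W
  have hWε : W ≤ ε := by
    obtain ⟨s, rfl⟩ : ∃ s, t = s + 1 := ⟨t - 1, (Nat.succ_pred_eq_of_pos ht).symm⟩
    have hss : s * (s + 1) ≤ D * d := by
      have h1 : s * (s + 1) ≤ (s + 1) ^ 2 := by nlinarith
      have h2 : (s + 1) ^ 2 < d := hd
      have h3 : d ≤ D * d := Nat.le_mul_of_pos_left d hD0
      omega
    have hnat := prod_range_add_le s (D * d) hss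
    have hcast : ((∏ k ∈ Finset.range (s + 1), (D * d + k) : ℕ) : ℝ) * ((D:ℝ) * d) ≤
        ((D:ℝ) * d) ^ (s + 2) + ((s:ℝ) + 1) * s * ((D:ℝ) * d) ^ (s + 1) := by
      exact_mod_cast hnat
    have hsumw : ∑ π : Equiv.Perm (Fin (s+1)), w π =
        ((∏ k ∈ Finset.range (s + 1), (D * d + k) : ℕ) : ℝ) / ((D:ℝ) * d) ^ (s + 1) := by
      rw [hwdef, ← Finset.sum_div]
      congr 1
      rw [← Nat.cast_sum, sum_fixCount]
      congr 1
      refine Finset.prod_congr rfl fun k _ => ?_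
      simp [Fintype.card_prod]
    have hW' : W = (∑ π : Equiv.Perm (Fin (s+1)), w π) - 1 := by
      rw [hWdef]
      have hsplit : ∀ π : Equiv.Perm (Fin (s+1)),
          (if π = 1 then (0:ℝ) else w π) = w π - (if π = 1 then w π else 0) := by
        intro π; split <;> ring
      rw [Finset.sum_congr rfl fun π _ => hsplit π, Finset.sum_sub_distrib,
        Finset.sum_ite_eq' Finset.univ 1 w, if_pos (Finset.mem_univ _), hw1]
    rw [hW', hsumw, sub_le_iff_le_add, div_le_iff₀ (by positivity)]
    have hεval : (ε + 1) * ((D:ℝ) * d) ^ (s + 1) * ((D:ℝ) * d) =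
        ((D:ℝ) * d) ^ (s + 2) + ((s:ℝ) + 1) * s * ((D:ℝ) * d) ^ (s + 1) := by
      rw [hε]
      have hcastt : ((s:ℝ) + 1) = ((s + 1 : ℕ) : ℝ) := by push_cast; ring
      field_simp
      push_cast
      ring
    refine le_of_mul_le_mul_right ?_ hNpos
    rw [hεval]
    exact hcast
  -- the triangle-inequality bound  |S - 1| ≤ S * W
  have habs : |S - 1| ≤ S * W := by
    have hRnorm : |S - 1| = ‖R‖ := by
      have h2 : ((S : ℝ) : ℂ) - 1 = -R := by rw [hSR]; ring
      calc |S - 1| = ‖((S - 1 : ℝ) : ℂ)‖ := (Complex.norm_real _).symm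
        _ = ‖((S : ℝ) : ℂ) - 1‖ := by push_cast; ring_nf
        _ = ‖-R‖ := by rw [h2]
        _ = ‖R‖ := norm_neg R
    rw [hRnorm]
    have step1 : ‖R‖ ≤ ∑ σ' : Equiv.Perm (Fin t), ∑ σ : Equiv.Perm (Fin t),
        (if σ' = σ then 0 else (‖a σ'‖^2/2 + ‖a σ‖^2/2) * w (σ⁻¹ * σ')) := by
      refine le_trans (norm_sum_le _ _) (Finset.sum_le_sum fun σ' _ =>
        le_trans (norm_sum_le _ _) (Finset.sum_le_sum fun σ _ => ?_))
      by_cases h : σ' = σ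
      · simp [h]
      · rw [if_neg h, if_neg h]
        have hnorm : ‖star (a σ') * a σ * ((w (σ⁻¹ * σ') : ℝ) : ℂ)‖ =
            ‖a σ'‖ * ‖a σ‖ * w (σ⁻¹ * σ') := by
          rw [norm_mul, norm_mul, norm_star, Complex.norm_real, Real.norm_eq_abs,
            abs_of_nonneg (hw_nonneg _)]
        rw [hnorm]
        have := sq_nonneg (‖a σ'‖ - ‖a σ‖)
        have := hw_nonneg (σ⁻¹ * σ')
        nlinarith
    refine le_trans step1 (le_of_eq ?_)
    have hsplitsum : ∀ σ' σ : Equiv.Perm (Fin t),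
        (if σ' = σ then (0:ℝ) else (‖a σ'‖^2/2 + ‖a σ‖^2/2) * w (σ⁻¹ * σ')) =
        ‖a σ'‖^2/2 * (if σ' = σ then 0 else w (σ⁻¹ * σ')) +
        ‖a σ‖^2/2 * (if σ' = σ then 0 else w (σ⁻¹ * σ')) := by
      intro σ' σ; split <;> ring
    calc ∑ σ' : Equiv.Perm (Fin t), ∑ σ : Equiv.Perm (Fin t),
        (if σ' = σ then 0 else (‖a σ'‖^2/2 + ‖a σ‖^2/2) * w (σ⁻¹ * σ'))
        = (∑ σ' : Equiv.Perm (Fin t), ∑ σ : Equiv.Perm (Fin t),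
            ‖a σ'‖^2/2 * (if σ' = σ then 0 else w (σ⁻¹ * σ'))) +
          (∑ σ' : Equiv.Perm (Fin t), ∑ σ : Equiv.Perm (Fin t),
            ‖a σ‖^2/2 * (if σ' = σ then 0 else w (σ⁻¹ * σ'))) := by
          rw [← Finset.sum_add_distrib]
          refine Finset.sum_congr rfl fun σ' _ => ?_
          rw [← Finset.sum_add_distrib]
          exact Finset.sum_congr rfl fun σ _ => hsplitsum σ' σ
      _ = (∑ σ' : Equiv.Perm (Fin t), ‖a σ'‖^2/2 * W) +
          (∑ σ : Equiv.Perm (Fin t), ‖a σ‖^2/2 * W) := by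
          congr 1
          · refine Finset.sum_congr rfl fun σ' _ => ?_
            rw [← Finset.mul_sum, hWrow σ']
          · rw [Finset.sum_comm]
            refine Finset.sum_congr rfl fun σ _ => ?_
            rw [← Finset.mul_sum, hWcol σ]
      _ = S * W := by
          have hhalf : ∑ σ : Equiv.Perm (Fin t), ‖a σ‖^2/2 = S/2 := by
            rw [hSdef, Finset.sum_div]
          rw [← Finset.sum_mul, hhalf]
          ring
  -- finish
  have hSW : |S - 1| ≤ S * ε :=
    le_trans habs (mul_le_mul_of_nonneg_left hWε hS0)
  have hεnn : 0 ≤ ε := by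
    apply div_nonneg _ hNpos.le
    have : (1:ℝ) ≤ (t:ℝ) := by exact_mod_cast ht
    nlinarith
  have hεlt : ε < 1 := by
    rw [hε, div_lt_one hNpos]
    have c1 : ((t:ℝ))^2 < (d:ℝ) := by exact_mod_cast hd
    have c2 : (d:ℝ) ≤ (D:ℝ) := by exact_mod_cast hD
    have c3 : (1:ℝ) ≤ (d:ℝ) := by exact_mod_cast hd0
    have c4 : (1:ℝ) ≤ (D:ℝ) := by exact_mod_cast hD0
    nlinarith
  have h1' := abs_le.mp hSW
  constructor
  · rw [div_le_iff₀ (by nlinarith)]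
    nlinarith [h1'.1]
  · rw [le_div_iff₀ (by nlinarith)]
    nlinarith [h1'.2]
end

section
/- Let b, c ∈ ℂ^{S_t} be vectors indexed by permutations with ‖b‖₂, ‖c‖₂ ≤ (1 - t(t-1)/(2d))^{-1/2}, and let d > t². Then Σ_{σ' ≠ σ} |c_{σ'}||b_σ| d^{c(σ'⁻¹σ) - t} ≤ (t(t-1)/d)·(1 - t(t-1)/(2d))^{-1} ≤ 2t(t-1)/d. -/
open Equiv Equiv.Perm Finset

variable {α : Type*} [Fintype α] [DecidableEq α]

/-- The "defect" of a permutation: support size minus number of nontrivial cycles. -/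
def pdefect (π : Perm α) : ℕ := π.support.card - Multiset.card π.cycleType

lemma two_mul_card_cycleType_le_s13 (π : Perm α) :
    2 * Multiset.card π.cycleType ≤ π.support.card := by
  rw [← π.sum_cycleType]
  simpa [mul_comm] using Multiset.card_nsmul_le_sum (fun x hx => two_le_of_mem_cycleType hx)

lemma card_cycleType_le (π : Perm α) : Multiset.card π.cycleType ≤ π.support.card := by
  have := two_mul_card_cycleType_le_s13 π; omega

lemma pdefect_eq_zero_iff {π : Perm α} : pdefect π = 0 ↔ π = 1 := by
  constructor
  · intro h
    by_contra hne
    have h1 : 0 < Multiset.card π.cycleType := card_cycleType_pos.2 hne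
    have h2 := two_mul_card_cycleType_le_s13 π
    unfold pdefect at h
    omega
  · intro h; subst h; simp [pdefect]

lemma pdefect_mul_of_disjoint {f g : Perm α} (h : Perm.Disjoint f g) :
    pdefect (f * g) = pdefect f + pdefect g := by
  have hs : (f * g).support.card = f.support.card + g.support.card := by
    rw [h.support_mul, card_union_of_disjoint (disjoint_iff_disjoint_support.mp h)]
  have hc : Multiset.card (f * g).cycleType
      = Multiset.card f.cycleType + Multiset.card g.cycleType := by
    rw [h.cycleType_mul, Multiset.card_add]
  have h1 := card_cycleType_le f
  have h2 := card_cycleType_le g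
  unfold pdefect
  omega

lemma pdefect_swap_mul {π : Perm α} {a : α} (ha : π a ≠ a) :
    pdefect (swap a (π a) * π) + 1 = pdefect π := by
  classical
  set c : Perm α := π.cycleOf a with hc
  have hmem : c ∈ π.cycleFactorsFinset := cycleOf_mem_cycleFactorsFinset_iff.2 (mem_support.2 ha)
  have hdisj : Perm.Disjoint (π * c⁻¹) c := disjoint_mul_inv_of_mem_cycleFactorsFinset hmem
  have hca : c a = π a := π.cycleOf_apply_self a
  have hcycle : Perm.IsCycle c := isCycle_cycleOf π ha
  have hcane : c a ≠ a := by rw [hca]; exact ha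
  -- swap commutes with π * c⁻¹
  have hsupswap : (swap a (π a)).support ⊆ c.support := by
    rw [support_swap (Ne.symm ha)]
    intro x hx
    simp only [mem_insert, mem_singleton] at hx
    rcases hx with rfl | rfl
    · exact mem_support.2 hcane
    · rw [← hca]; exact apply_mem_support.2 (mem_support.2 hcane)
  have hdisj2 : Perm.Disjoint (π * c⁻¹) (swap a (π a)) := by
    rw [disjoint_iff_disjoint_support] at hdisj ⊢
    exact hdisj.mono_right hsupswap
  have hsplit : pdefect π = pdefect (π * c⁻¹) + pdefect c := by
    have h := pdefect_mul_of_disjoint hdisj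
    rwa [inv_mul_cancel_right] at h
  have hkey : swap a (π a) * π = (π * c⁻¹) * (swap a (π a) * c) := by
    symm
    rw [← mul_assoc, hdisj2.commute.eq, mul_assoc, inv_mul_cancel_right]
  by_cases h2 : c (c a) = a
  · -- c is the swap itself
    have hcswap : c = swap a (c a) := hcycle.eq_swap_of_apply_apply_eq_self hcane h2
    have hone : swap a (π a) * c = 1 := by
      rw [hcswap, ← hca]; exact swap_mul_self _ _
    have hd1 : pdefect c = 1 := by
      have hsc : c.support.card = 2 := by rw [hcswap]; exact card_support_swap hcane.symm
      have hct : Multiset.card c.cycleType = 1 := card_cycleType_eq_one.2 hcycle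
      unfold pdefect; omega
    rw [hkey, hone, mul_one, hsplit, hd1]
  · -- swap a (π a) * c is a cycle with support c.support.erase a
    have hsc2 : (swap a (c a) * c).support = c.support \ {a} := support_swap_mul_eq c a h2
    have hcyc2 : Perm.IsCycle (swap a (c a) * c) := hcycle.swap_mul hcane h2
    have hamem : a ∈ c.support := mem_support.2 hcane
    have hcard2 : (swap a (c a) * c).support.card + 1 = c.support.card := by
      rw [hsc2, sdiff_singleton_eq_erase, card_erase_of_mem hamem]
      have := hcycle.two_le_card_support
      omega
    have hdnew : pdefect (swap a (c a) * c) + 1 = pdefect c := by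
      have h1 : Multiset.card (swap a (c a) * c).cycleType = 1 := card_cycleType_eq_one.2 hcyc2
      have h2' : Multiset.card c.cycleType = 1 := card_cycleType_eq_one.2 hcycle
      have := hcycle.two_le_card_support
      unfold pdefect; omega
    have hdisj3 : Perm.Disjoint (π * c⁻¹) (swap a (c a) * c) := by
      rw [disjoint_iff_disjoint_support] at hdisj ⊢
      refine hdisj.mono_right ?_
      rw [hsc2]; exact sdiff_subset
    rw [hkey, ← hca, pdefect_mul_of_disjoint hdisj3, hsplit]
    omega

lemma support_nonempty' {t : ℕ} {π : Equiv.Perm (Fin t)} (h : π ≠ 1) : π.support.Nonempty := by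
  rw [Finset.nonempty_iff_ne_empty]
  intro he
  exact h (Equiv.Perm.support_eq_empty_iff.mp he)

/-- least non-fixed point (junk value if `π = 1`). -/
def minp {t : ℕ} [NeZero t] (π : Equiv.Perm (Fin t)) : Fin t :=
  if h : π.support.Nonempty then π.support.min' h else 0

lemma minp_def {t : ℕ} [NeZero t] {π : Equiv.Perm (Fin t)} (h : π ≠ 1) :
    minp π = π.support.min' (support_nonempty' h) := by
  simp [minp, support_nonempty' h]

lemma card_pairs_le (t : ℕ) :
    ((univ : Finset (Fin t × Fin t)).filter fun p => p.1 < p.2).card ≤ Nat.choose t 2 := by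
  have h := Finset.card_le_card_of_injOn
      (f := fun p : Fin t × Fin t => ({p.1, p.2} : Finset (Fin t)))
      (t := Finset.powersetCard 2 (univ : Finset (Fin t)))
      (s := (univ : Finset (Fin t × Fin t)).filter fun p => p.1 < p.2)
      (by
        intro p hp
        simp only [mem_coe, mem_filter] at hp ⊢
        rw [Finset.mem_powersetCard]
        exact ⟨subset_univ _, card_pair (ne_of_lt hp.2)⟩)
      (by
        intro p hp q hq heq
        replace heq : ({p.1, p.2} : Finset (Fin t)) = {q.1, q.2} := heq
        simp only [coe_filter, Set.mem_setOf_eq, mem_univ, true_and] at hp hq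
        have h1 : p.1 ∈ ({q.1, q.2} : Finset (Fin t)) := by rw [← heq]; simp
        have h2 : p.2 ∈ ({q.1, q.2} : Finset (Fin t)) := by rw [← heq]; simp
        have h3 : q.1 ∈ ({p.1, p.2} : Finset (Fin t)) := by rw [heq]; simp
        simp only [mem_insert, mem_singleton] at h1 h2 h3
        rw [Fin.lt_def] at hp hq
        have v1 := h1.imp (congrArg Fin.val) (congrArg Fin.val)
        have v2 := h2.imp (congrArg Fin.val) (congrArg Fin.val)
        have v3 := h3.imp (congrArg Fin.val) (congrArg Fin.val)
        refine Prod.ext (Fin.ext ?_) (Fin.ext ?_) <;> omega)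
  simpa [Finset.card_powersetCard] using h

lemma card_pdefect_succ (t k : ℕ) :
    ((univ : Finset (Perm (Fin t))).filter fun π => pdefect π = k + 1).card ≤
    ((univ : Finset (Perm (Fin t))).filter fun π => pdefect π = k).card * Nat.choose t 2 := by
  classical
  rcases Nat.eq_zero_or_pos t with rfl | htpos
  · have : ((univ : Finset (Perm (Fin 0))).filter fun π => pdefect π = k + 1) = ∅ := by
      apply Finset.filter_false_of_mem
      intro π _
      have : π = 1 := Subsingleton.elim _ _
      simp [this, pdefect]
    rw [this]
    simp
  have : NeZero t := ⟨htpos.ne'⟩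
  set P := (univ : Finset (Fin t × Fin t)).filter fun p => p.1 < p.2 with hP
  have key : ((univ : Finset (Perm (Fin t))).filter fun π => pdefect π = k + 1).card ≤
      (((univ : Finset (Perm (Fin t))).filter fun π => pdefect π = k) ×ˢ P).card := by
    apply Finset.card_le_card_of_injOn
      (f := fun π => (Equiv.swap (minp π) (π (minp π)) * π, (minp π, π (minp π))))
    · intro π hπ
      simp only [mem_coe, mem_filter, mem_univ, true_and] at hπ
      have hne : π ≠ 1 := by
        intro h; rw [h] at hπ; simp [pdefect] at hπ
      have hsupp : π.support.Nonempty := support_nonempty' hne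
      have hmem : minp π ∈ π.support := by
        rw [minp_def hne]; exact π.support.min'_mem _
      have ha : π (minp π) ≠ minp π := mem_support.1 hmem
      have hlt : minp π < π (minp π) := by
        refine lt_of_le_of_ne ?_ (Ne.symm ha)
        rw [minp_def hne]
        exact π.support.min'_le _ (by rw [← minp_def hne]; exact apply_mem_support.2 hmem)
      simp only [mem_coe, Finset.mem_product, mem_filter, mem_univ, true_and, hP]
      constructor
      · have := pdefect_swap_mul ha
        omega
      · exact hlt
    · intro π hπ π' hπ' heq
      simp only [Prod.mk.injEq] at heq
      obtain ⟨h1, h2, h3⟩ := heq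
      rw [h3, h2] at h1
      exact mul_left_cancel h1
  calc _ ≤ _ := key
  _ = ((univ : Finset (Perm (Fin t))).filter fun π => pdefect π = k).card * P.card :=
      Finset.card_product _ _
  _ ≤ _ := Nat.mul_le_mul_left _ (card_pairs_le t)

lemma card_pdefect_le (t k : ℕ) :
    ((univ : Finset (Perm (Fin t))).filter fun π => pdefect π = k).card ≤ Nat.choose t 2 ^ k := by
  induction k with
  | zero =>
    simp only [pow_zero]
    have hss : ((univ : Finset (Perm (Fin t))).filter fun π => pdefect π = 0) ⊆ {1} := by
      intro π hπ
      simp only [mem_filter, mem_univ, true_and] at hπ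
      simp [pdefect_eq_zero_iff.mp hπ]
    simpa using Finset.card_le_card hss
  | succ k ih =>
    calc _ ≤ _ := card_pdefect_succ t k
    _ ≤ Nat.choose t 2 ^ k * Nat.choose t 2 := Nat.mul_le_mul_right _ ih
    _ = Nat.choose t 2 ^ (k + 1) := (pow_succ _ _).symm

lemma xfacts (t d : ℕ) (ht : 0 < t) (hd : t ^ 2 < d) :
    (0:ℝ) ≤ (t:ℝ) * ((t:ℝ) - 1) / (2 * d) ∧ (t:ℝ) * ((t:ℝ) - 1) / (2 * d) ≤ 1/2 := by
  have h1 : (1:ℝ) ≤ (t:ℝ) := by exact_mod_cast ht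
  have h2 : (t:ℝ)^2 < (d:ℝ) := by exact_mod_cast hd
  have hd0 : (0:ℝ) < d := by nlinarith
  constructor
  · apply div_nonneg (by nlinarith) (by positivity)
  · rw [div_le_iff₀ (by positivity)]
    nlinarith

lemma geom_tail_le {x : ℝ} (hx0 : 0 ≤ x) (hx1 : x < 1) (n : ℕ) :
    ∑ k ∈ Finset.Icc 1 n, x ^ k ≤ x / (1 - x) := by
  have h1x : 0 < 1 - x := by linarith
  have hgeom : ∑ j ∈ Finset.range n, x ^ j ≤ 1 / (1 - x) := by
    have h := geom_sum_mul x n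
    have hxn : (0:ℝ) ≤ x ^ n := pow_nonneg hx0 n
    rw [le_div_iff₀ h1x]
    nlinarith [h]
  have hre : ∑ k ∈ Finset.Icc 1 n, x ^ k = x * ∑ j ∈ Finset.range n, x ^ j := by
    rw [Finset.mul_sum]
    rw [show Finset.Icc 1 n = Finset.map ⟨Nat.succ, Nat.succ_injective⟩ (Finset.range n) from ?_]
    · rw [Finset.sum_map]
      apply Finset.sum_congr rfl
      intro j _
      simp [pow_succ, mul_comm]
    · ext k
      simp only [Finset.mem_Icc, Finset.mem_map, Finset.mem_range, Function.Embedding.coeFn_mk]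
      constructor
      · rintro ⟨h1, h2⟩
        exact ⟨k - 1, by omega, by omega⟩
      · rintro ⟨j, hj, rfl⟩
        omega
  rw [hre, div_eq_mul_one_div]
  exact mul_le_mul_of_nonneg_left hgeom hx0

lemma rowsum_le' (t d : ℕ) (ht : 0 < t) (hd : t ^ 2 < d)
    (pdefect : Perm (Fin t) → ℕ)
    (hcard : ∀ k, ((univ.filter fun π : Perm (Fin t) => pdefect π = k).card ≤ Nat.choose t 2 ^ k))
    (hpos : ∀ π : Perm (Fin t), π ≠ 1 → 1 ≤ pdefect π)
    (hle : ∀ π : Perm (Fin t), pdefect π ≤ t) :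
    ∑ π ∈ (univ.filter fun π : Perm (Fin t) => π ≠ 1), ((d:ℝ)⁻¹) ^ (pdefect π)
      ≤ ((t:ℝ) * ((t:ℝ) - 1) / (2*d)) / (1 - (t:ℝ) * ((t:ℝ) - 1) / (2*d)) := by
  obtain ⟨hx0, hx12⟩ := xfacts t d ht hd
  set x : ℝ := (t:ℝ) * ((t:ℝ) - 1) / (2*d) with hx
  have h1 : (1:ℝ) ≤ (t:ℝ) := by exact_mod_cast ht
  have h2 : (t:ℝ)^2 < (d:ℝ) := by exact_mod_cast hd
  have hd0 : (0:ℝ) < d := by nlinarith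
  have hmaps : ∀ π ∈ univ.filter (fun π : Perm (Fin t) => π ≠ 1),
      pdefect π ∈ Finset.Icc 1 t := by
    intro π hπ
    simp only [mem_filter, mem_univ, true_and] at hπ
    exact Finset.mem_Icc.2 ⟨hpos π hπ, hle π⟩
  calc ∑ π ∈ (univ.filter fun π : Perm (Fin t) => π ≠ 1), ((d:ℝ)⁻¹) ^ (pdefect π)
      = ∑ k ∈ Finset.Icc 1 t, ∑ π ∈ (univ.filter fun π : Perm (Fin t) => π ≠ 1).filter
          (fun π => pdefect π = k), ((d:ℝ)⁻¹) ^ (pdefect π) :=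
        (Finset.sum_fiberwise_of_maps_to hmaps _).symm
  _ ≤ ∑ k ∈ Finset.Icc 1 t, x ^ k := by
      apply Finset.sum_le_sum
      intro k _
      have hsum : ∑ π ∈ (univ.filter fun π : Perm (Fin t) => π ≠ 1).filter
          (fun π => pdefect π = k), ((d:ℝ)⁻¹) ^ (pdefect π)
          = ((univ.filter fun π : Perm (Fin t) => π ≠ 1).filter
              (fun π => pdefect π = k)).card * ((d:ℝ)⁻¹) ^ k := by
        rw [Finset.sum_congr rfl (fun π hπ => ?_), Finset.sum_const, nsmul_eq_mul]
        simp only [mem_filter] at hπ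
        rw [hπ.2]
      rw [hsum]
      have hsub : ((univ.filter fun π : Perm (Fin t) => π ≠ 1).filter
          (fun π => pdefect π = k)).card ≤ Nat.choose t 2 ^ k := by
        refine le_trans (Finset.card_le_card ?_) (hcard k)
        intro π hπ
        simp only [mem_filter] at hπ ⊢
        exact ⟨mem_univ _, hπ.2⟩
      have hchoose : ((Nat.choose t 2 : ℕ) : ℝ) * (d:ℝ)⁻¹ = x := by
        rw [Nat.cast_choose_two, hx]
        field_simp
      calc (((univ.filter fun π : Perm (Fin t) => π ≠ 1).filter
          (fun π => pdefect π = k)).card : ℝ) * ((d:ℝ)⁻¹) ^ k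
          ≤ ((Nat.choose t 2 ^ k : ℕ) : ℝ) * ((d:ℝ)⁻¹) ^ k := by
            apply mul_le_mul_of_nonneg_right (by exact_mod_cast hsub) (by positivity)
      _ = (((Nat.choose t 2 : ℕ):ℝ) * (d:ℝ)⁻¹) ^ k := by
            rw [mul_pow]; norm_num
      _ = x ^ k := by rw [hchoose]
  _ ≤ x / (1 - x) := geom_tail_le hx0 (lt_of_le_of_lt hx12 (by norm_num)) t

lemma marg_left {t : ℕ} (g : Perm (Fin t) → ℝ) (σ' : Perm (Fin t)) :
    (∑ σ : Perm (Fin t), if σ' ≠ σ then g (σ'⁻¹ * σ) else 0)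
      = ∑ π ∈ univ.filter (fun π : Perm (Fin t) => π ≠ 1), g π := by
  rw [Finset.sum_filter]
  refine (Fintype.sum_equiv (Equiv.mulLeft σ') _ _ ?_).symm
  intro π
  simp only [Equiv.coe_mulLeft, inv_mul_cancel_left, ne_eq, left_eq_mul]

lemma marg_right {t : ℕ} (g : Perm (Fin t) → ℝ) (σ : Perm (Fin t)) :
    (∑ σ' : Perm (Fin t), if σ' ≠ σ then g (σ'⁻¹ * σ) else 0)
      = ∑ π ∈ univ.filter (fun π : Perm (Fin t) => π ≠ 1), g π := by
  rw [Finset.sum_filter]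
  refine (Fintype.sum_equiv ((Equiv.inv (Perm (Fin t))).trans (Equiv.mulLeft σ)) _ _ ?_).symm
  intro π
  simp only [Equiv.trans_apply, Equiv.inv_apply, Equiv.coe_mulLeft, ne_eq,
    mul_inv_rev, inv_inv, mul_assoc, inv_mul_cancel, mul_one, mul_eq_left, inv_eq_one]

lemma cycleCount_add_pdefect {t : ℕ} (π : Perm (Fin t)) :
    cycleCount π + pdefect π = t := by
  have hfix : (Finset.univ.filter fun x => π x = x).card + π.support.card = t := by
    have h := Finset.card_filter_add_card_filter_not
      (s := (univ : Finset (Fin t))) (p := fun x => π x = x)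
    have hsupp : π.support = univ.filter (fun x => ¬ π x = x) := rfl
    rw [hsupp]
    simpa using h
  have hcle := card_cycleType_le π
  have hst : π.support.card ≤ t := by
    have := Finset.card_le_univ π.support
    simpa using this
  unfold cycleCount pdefect
  omega

/-- If `b, c ∈ ℂ^{S_t}` have `ℓ₂`-norms at most `(1 - t(t-1)/(2d))^{-1/2}` and
`d > t²`, then `Σ_{σ' ≠ σ} |c_{σ'}||b_σ| d^(c(σ'⁻¹σ)-t)` is at most
`(t(t-1)/d)(1 - t(t-1)/(2d))⁻¹`, which is at most `2t(t-1)/d`. -/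
theorem stmt_13 (t d : ℕ) (ht : 0 < t) (hd : t ^ 2 < d)
    (b c : Equiv.Perm (Fin t) → ℂ)
    (hb : Real.sqrt (∑ σ, ‖b σ‖ ^ 2) ≤
      (Real.sqrt (1 - (t : ℝ) * ((t : ℝ) - 1) / (2 * d)))⁻¹)
    (hc : Real.sqrt (∑ σ, ‖c σ‖ ^ 2) ≤
      (Real.sqrt (1 - (t : ℝ) * ((t : ℝ) - 1) / (2 * d)))⁻¹) :
    (∑ p ∈ Finset.univ.filter
        (fun p : Equiv.Perm (Fin t) × Equiv.Perm (Fin t) => p.1 ≠ p.2),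
        ‖c p.1‖ * ‖b p.2‖ * ((d : ℝ) ^ (cycleCount (p.1⁻¹ * p.2)) / (d : ℝ) ^ t)) ≤
      (t : ℝ) * ((t : ℝ) - 1) / d * (1 - (t : ℝ) * ((t : ℝ) - 1) / (2 * d))⁻¹ ∧
    (t : ℝ) * ((t : ℝ) - 1) / d * (1 - (t : ℝ) * ((t : ℝ) - 1) / (2 * d))⁻¹ ≤
      2 * (t : ℝ) * ((t : ℝ) - 1) / d := by
  classical
  obtain ⟨hx0, hx12⟩ := xfacts t d ht hd
  set x : ℝ := (t:ℝ) * ((t:ℝ) - 1) / (2 * d) with hxdef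
  have h1 : (1:ℝ) ≤ (t:ℝ) := by exact_mod_cast ht
  have h2 : (t:ℝ)^2 < (d:ℝ) := by exact_mod_cast hd
  have hd0 : (0:ℝ) < d := by nlinarith
  have h1x : (1:ℝ)/2 ≤ 1 - x := by linarith
  have h1x0 : (0:ℝ) < 1 - x := by linarith
  have hinv2 : (1 - x)⁻¹ ≤ 2 := by
    rw [show (2:ℝ) = ((1:ℝ)/2)⁻¹ by norm_num]
    exact inv_anti₀ (by norm_num) h1x
  have hinv0 : (0:ℝ) ≤ (1 - x)⁻¹ := by positivity
  have htd : (t:ℝ) * ((t:ℝ) - 1) / d = 2 * x := by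
    rw [hxdef]; field_simp
  constructor
  swap
  · rw [htd]
    have hx0' : (0:ℝ) ≤ 2 * x := by linarith
    calc 2 * x * (1 - x)⁻¹ ≤ 2 * x * 2 := mul_le_mul_of_nonneg_left hinv2 hx0'
    _ = 2 * ((t:ℝ) * ((t:ℝ) - 1) / d) := by rw [htd]; ring
    _ = 2 * (t:ℝ) * ((t:ℝ) - 1) / d := by ring
  -- main inequality
  set g : Perm (Fin t) → ℝ := fun π => ((d:ℝ)⁻¹) ^ (pdefect π) with hgdef
  set R : ℝ := ∑ π ∈ (univ.filter fun π : Perm (Fin t) => π ≠ 1), g π with hRdef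
  have hR : R ≤ x / (1 - x) := by
    apply rowsum_le' t d ht hd pdefect (card_pdefect_le t)
    · intro π hπ
      rcases Nat.eq_zero_or_pos (pdefect π) with h0 | h0
      · exact absurd (pdefect_eq_zero_iff.mp h0) hπ
      · exact h0
    · intro π
      have h := cycleCount_add_pdefect π
      omega
  have hR0 : (0:ℝ) ≤ R := by
    apply Finset.sum_nonneg
    intro π _
    positivity
  have hM : ∀ π : Perm (Fin t),
      (d : ℝ) ^ (cycleCount π) / (d : ℝ) ^ t = g π := by
    intro π
    have hsum := cycleCount_add_pdefect π
    have hdt : (d:ℝ) ^ t = (d:ℝ) ^ (cycleCount π) * (d:ℝ) ^ (pdefect π) := by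
      rw [← pow_add, hsum]
    rw [hgdef]
    simp only
    rw [hdt, div_mul_eq_div_div, div_self (by positivity), one_div, ← inv_pow]
  have hM0 : ∀ π : Perm (Fin t), (0:ℝ) ≤ g π := fun π => by positivity
  set Sc : ℝ := ∑ σ, ‖c σ‖ ^ 2 with hScdef
  set Sb : ℝ := ∑ σ, ‖b σ‖ ^ 2 with hSbdef
  have hSc0 : (0:ℝ) ≤ Sc := Finset.sum_nonneg fun σ _ => by positivity
  have hSb0 : (0:ℝ) ≤ Sb := Finset.sum_nonneg fun σ _ => by positivity
  have hScle : Sc ≤ (1 - x)⁻¹ := by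
    have h := pow_le_pow_left₀ (Real.sqrt_nonneg Sc) hc 2
    rwa [Real.sq_sqrt hSc0, ← Real.sqrt_inv, Real.sq_sqrt (by positivity)] at h
  have hSble : Sb ≤ (1 - x)⁻¹ := by
    have h := pow_le_pow_left₀ (Real.sqrt_nonneg Sb) hb 2
    rwa [Real.sq_sqrt hSb0, ← Real.sqrt_inv, Real.sq_sqrt (by positivity)] at h
  have hA : (∑ p ∈ Finset.univ.filter
        (fun p : Equiv.Perm (Fin t) × Equiv.Perm (Fin t) => p.1 ≠ p.2),
        ‖c p.1‖ ^ 2 * g (p.1⁻¹ * p.2)) = Sc * R := by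
    rw [Finset.sum_filter, Fintype.sum_prod_type]
    calc (∑ σ' : Perm (Fin t), ∑ σ : Perm (Fin t),
          if σ' ≠ σ then ‖c σ'‖ ^ 2 * g (σ'⁻¹ * σ) else 0)
        = ∑ σ' : Perm (Fin t), ‖c σ'‖ ^ 2 * R := by
          apply Finset.sum_congr rfl
          intro σ' _
          have hpt : ∀ σ : Perm (Fin t), (if σ' ≠ σ then ‖c σ'‖ ^ 2 * g (σ'⁻¹ * σ) else 0)
              = ‖c σ'‖ ^ 2 * (if σ' ≠ σ then g (σ'⁻¹ * σ) else 0) := by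
            intro σ; split <;> simp
          rw [Finset.sum_congr rfl (fun σ _ => hpt σ), ← Finset.mul_sum,
            marg_left g σ', hRdef]
    _ = Sc * R := (Finset.sum_mul _ _ _).symm
  have hB : (∑ p ∈ Finset.univ.filter
        (fun p : Equiv.Perm (Fin t) × Equiv.Perm (Fin t) => p.1 ≠ p.2),
        ‖b p.2‖ ^ 2 * g (p.1⁻¹ * p.2)) = Sb * R := by
    rw [Finset.sum_filter, Fintype.sum_prod_type_right]
    calc (∑ σ : Perm (Fin t), ∑ σ' : Perm (Fin t),
          if σ' ≠ σ then ‖b σ‖ ^ 2 * g (σ'⁻¹ * σ) else 0)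
        = ∑ σ : Perm (Fin t), ‖b σ‖ ^ 2 * R := by
          apply Finset.sum_congr rfl
          intro σ _
          have hpt : ∀ σ' : Perm (Fin t), (if σ' ≠ σ then ‖b σ‖ ^ 2 * g (σ'⁻¹ * σ) else 0)
              = ‖b σ‖ ^ 2 * (if σ' ≠ σ then g (σ'⁻¹ * σ) else 0) := by
            intro σ'; split <;> simp
          rw [Finset.sum_congr rfl (fun σ' _ => hpt σ'), ← Finset.mul_sum,
            marg_right g σ, hRdef]
    _ = Sb * R := (Finset.sum_mul _ _ _).symm
  calc (∑ p ∈ Finset.univ.filter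
        (fun p : Equiv.Perm (Fin t) × Equiv.Perm (Fin t) => p.1 ≠ p.2),
        ‖c p.1‖ * ‖b p.2‖ * ((d : ℝ) ^ (cycleCount (p.1⁻¹ * p.2)) / (d : ℝ) ^ t))
      = ∑ p ∈ Finset.univ.filter
        (fun p : Equiv.Perm (Fin t) × Equiv.Perm (Fin t) => p.1 ≠ p.2),
        ‖c p.1‖ * ‖b p.2‖ * g (p.1⁻¹ * p.2) := by
        apply Finset.sum_congr rfl
        intro p _
        rw [hM]
  _ ≤ ∑ p ∈ Finset.univ.filter
        (fun p : Equiv.Perm (Fin t) × Equiv.Perm (Fin t) => p.1 ≠ p.2),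
        (2⁻¹ * ‖c p.1‖ ^ 2 + 2⁻¹ * ‖b p.2‖ ^ 2) * g (p.1⁻¹ * p.2) := by
        apply Finset.sum_le_sum
        intro p _
        apply mul_le_mul_of_nonneg_right _ (hM0 _)
        nlinarith [sq_nonneg (‖c p.1‖ - ‖b p.2‖), norm_nonneg (c p.1), norm_nonneg (b p.2)]
  _ = 2⁻¹ * (Sc * R) + 2⁻¹ * (Sb * R) := by
        rw [← hA, ← hB, Finset.mul_sum, Finset.mul_sum, ← Finset.sum_add_distrib]
        apply Finset.sum_congr rfl
        intro p _
        ring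
  _ ≤ (1 - x)⁻¹ * R := by
        have h := mul_le_mul_of_nonneg_right (add_le_add hScle hSble) hR0
        linarith
  _ ≤ (1 - x)⁻¹ * (x / (1 - x)) := mul_le_mul_of_nonneg_left hR hinv0
  _ ≤ (1 - x)⁻¹ * (2 * x) := by
        apply mul_le_mul_of_nonneg_left _ hinv0
        rw [div_le_iff₀ h1x0]
        nlinarith
  _ = (t:ℝ) * ((t:ℝ) - 1) / d * (1 - x)⁻¹ := by rw [htd]; ring
end
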